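/- arXiv:1912.11385 — 6 statements merged into one kernel-verified Lean document; each statement's English description precedes it below -/
import Mathlib

section
/- A finite simple graph G has a clique k-cover (a family of cliques covering every edge such that every vertex belongs to at most k cliques) if and only if G is the intersection graph of a hypergraph of rank at most k. -/
open SimpleGraph

/-- A clique `k`-cover: a family of cliques covering every edge,
with every vertex in at most `k` cliques. -/
def CliqueKCover {V : Type} [Fintype V] [DecidableEq V] (G : SimpleGraph V) (k : ℕ)
    (𝒞 : Finset (Finset V)) : Prop :=
  (∀ C ∈ 𝒞, G.IsClique (C : Set V)) ∧
  (∀ u v : V, G.Adj u v → ∃ C ∈ 𝒞, u ∈ C ∧ v ∈ C) ∧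
  (∀ v : V, (𝒞.filter (fun C => v ∈ C)).card ≤ k)

/-- A separating equivalent `k`-cover: a clique cover whose cliques can be colored
with `k` colors so that intersecting cliques get distinct colors, and such that
every two distinct vertices are separated by some clique. -/
def SepEqCover {V : Type} [Fintype V] [DecidableEq V] (G : SimpleGraph V) (k : ℕ)
    (𝒞 : Finset (Finset V)) : Prop :=
  (∀ C ∈ 𝒞, G.IsClique (C : Set V)) ∧
  (∀ u v : V, G.Adj u v → ∃ C ∈ 𝒞, u ∈ C ∧ v ∈ C) ∧
  (∃ c : Finset V → ℕ, (∀ C ∈ 𝒞, c C < k) ∧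
    ∀ C ∈ 𝒞, ∀ D ∈ 𝒞, C ≠ D → (C ∩ D).Nonempty → c C ≠ c D) ∧
  (∀ u v : V, u ≠ v → ∃ C ∈ 𝒞, (u ∈ C ∧ v ∉ C) ∨ (v ∈ C ∧ u ∉ C))

/-- A finite simple graph has a clique `k`-cover iff it is the intersection graph
of a hypergraph of rank at most `k`. -/
theorem stmt_0 {V : Type} [Fintype V] [DecidableEq V] (G : SimpleGraph V) (k : ℕ) :
    (∃ 𝒞 : Finset (Finset V), CliqueKCover G k 𝒞) ↔
      ∃ (W : Type) (_ : Fintype W) (_ : DecidableEq W) (E : V → Finset W),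
        (∀ x : V, (E x).card ≤ k) ∧
        (∀ u v : V, G.Adj u v ↔ u ≠ v ∧ (E u ∩ E v).Nonempty) := by
  classical
  constructor
  · rintro ⟨𝒞, hclique, hcover, hcard⟩
    refine ⟨Finset V, inferInstance, inferInstance,
      fun x => 𝒞.filter (fun C => x ∈ C), fun x => hcard x, fun u v => ?_⟩
    constructor
    · intro h
      refine ⟨h.ne, ?_⟩
      obtain ⟨C, hC, hu, hv⟩ := hcover u v h
      exact ⟨C, by simp [Finset.mem_inter, Finset.mem_filter, hC, hu, hv]⟩
    · rintro ⟨hne, C, hC⟩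
      simp only [Finset.mem_inter, Finset.mem_filter] at hC
      exact hclique C hC.1.1 hC.1.2 hC.2.2 hne
  · rintro ⟨W, _, _, E, hk, hadj⟩
    classical
    set f : W → Finset V := fun w => Finset.univ.filter (fun x => w ∈ E x) with hf
    refine ⟨Finset.univ.image f, ?_, ?_, ?_⟩
    · intro C hC
      obtain ⟨w, -, rfl⟩ := Finset.mem_image.mp hC
      intro x hx y hy hxy
      simp only [hf, Finset.coe_filter, Set.mem_setOf_eq] at hx hy
      exact (hadj x y).mpr ⟨hxy, w, Finset.mem_inter.mpr ⟨hx.2, hy.2⟩⟩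
    · intro u v h
      obtain ⟨hne, w, hw⟩ := (hadj u v).mp h
      rw [Finset.mem_inter] at hw
      exact ⟨f w, Finset.mem_image_of_mem f (Finset.mem_univ w),
        by simp [hf, hw.1], by simp [hf, hw.2]⟩
    · intro v
      calc ((Finset.univ.image f).filter (fun C => v ∈ C)).card
          ≤ ((E v).image f).card := by
            apply Finset.card_le_card
            intro C hC
            simp only [Finset.mem_filter, Finset.mem_image] at hC ⊢
            obtain ⟨⟨w, -, rfl⟩, hv⟩ := hC
            refine ⟨w, ?_, rfl⟩
            simpa [hf] using hv
        _ ≤ (E v).card := Finset.card_image_le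
        _ ≤ k := hk v
end

section
/- Let G be a connected triangle-free finite simple graph with at least 3 vertices. Then dim_P(complement of G) equals the edge chromatic number χ'(G); consequently, G is a fractal (dim_R(G) < dim_P(Ḡ)) if and only if G is of class 2 (χ'(G) = Δ(G)+1). -/
open SimpleGraph

variable {V : Type} [Fintype V] [DecidableEq V]

/-- Partial proper edge coloring with colors < D+1. -/
structure PC (G : SimpleGraph V) (D : ℕ) where
  f : V → V → Option ℕ
  symm : ∀ u v, f u v = f v u
  adj : ∀ u v k, f u v = some k → G.Adj u v
  lt : ∀ u v k, f u v = some k → k < D + 1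
  proper : ∀ u v w k, f u v = some k → f u w = some k → v = w

def PC.Free {G : SimpleGraph V} {D : ℕ} (p : PC G D) (v : V) (k : ℕ) : Prop :=
  ∀ u, p.f v u ≠ some k

lemma PC.free_exists {G : SimpleGraph V} [DecidableRel G.Adj] {D : ℕ}
    (hD : ∀ v, G.degree v ≤ D) (p : PC G D) (v : V) :
    ∃ k, k < D + 1 ∧ p.Free v k := by
  classical
  set img : Finset ℕ := (G.neighborFinset v).image (fun u => (p.f v u).getD (D+1)) with himg
  have hcard : img.card < (Finset.range (D+1)).card := by
    calc img.card ≤ (G.neighborFinset v).card := Finset.card_image_le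
    _ = G.degree v := by rw [SimpleGraph.card_neighborFinset_eq_degree]
    _ < D + 1 := Nat.lt_succ_of_le (hD v)
    _ = (Finset.range (D+1)).card := (Finset.card_range _).symm
  have hns : ¬ (Finset.range (D+1) ⊆ img) := fun h => absurd (Finset.card_le_card h) (by omega)
  obtain ⟨k, hk, hknot⟩ := Finset.not_subset.mp hns
  refine ⟨k, Finset.mem_range.mp hk, fun u hu => hknot ?_⟩
  rw [himg]
  refine Finset.mem_image.mpr ⟨u, ?_, by rw [hu]; rfl⟩
  rw [SimpleGraph.mem_neighborFinset]
  exact p.adj v u k hu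
lemma PC.rotate {G : SimpleGraph V} {D : ℕ} (p : PC G D) (x : V) (k : ℕ)
    (y : ℕ → V) (b : ℕ → ℕ)
    (hyadj : ∀ m, m ≤ k → G.Adj x (y m))
    (hinj : ∀ m, m ≤ k → ∀ m', m' ≤ k → y m = y m' → m = m')
    (hcol : ∀ m, m < k → p.f x (y (m+1)) = some (b m))
    (hfree : ∀ m, m < k → p.Free (y m) (b m))
    (γ : ℕ) (hγ : γ < D+1) (hγx : p.Free x γ) (hγk : p.Free (y k) γ) :
    ∃ q : PC G D, (q.f x (y 0)).isSome ∧ ∀ u v, (p.f u v).isSome → (q.f u v).isSome := by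
  classical
  set F : V → Prop := fun z => ∃ m, m ≤ k ∧ y m = z with hF
  have hFy : ∀ m, m ≤ k → F (y m) := fun m hm => ⟨m, hm, rfl⟩
  have hFx : ¬ F x := by
    rintro ⟨m, hm, hyx⟩
    exact G.irrefl (hyx ▸ hyadj m hm)
  -- new color function
  set ν : V → ℕ := fun z => if h : F z then (if Classical.choose h < k then b (Classical.choose h) else γ) else 0 with hν
  have nu_spec : ∀ m, m ≤ k → ν (y m) = if m < k then b m else γ := by
    intro m hm
    have h : F (y m) := hFy m hm
    have hch := Classical.choose_spec h
    have : Classical.choose h = m := hinj _ hch.1 _ hm hch.2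
    simp only [hν, dif_pos h, this]
  have nu_lt : ∀ z, ν z < D + 1 := by
    intro z
    simp only [hν]
    split
    · next h =>
      have hch := Classical.choose_spec h
      split
      · next hlt => exact p.lt _ _ _ (hcol _ hlt)
      · exact hγ
    · omega
  -- b values are present at x, distinct, ≠ γ
  have bneγ : ∀ m, m < k → b m ≠ γ := by
    intro m hm hbg
    exact hγx (y (m+1)) (by rw [← hbg]; exact hcol m hm)
  have binj : ∀ m, m < k → ∀ m', m' < k → b m = b m' → m = m' := by
    intro m hm m' hm' hbb
    have := p.proper x (y (m+1)) (y (m'+1)) (b m) (hcol m hm) (by rw [hbb]; exact hcol m' hm')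
    have := hinj _ (by omega) _ (by omega) this
    omega
  -- the new coloring
  set g : V → V → Option ℕ := fun u v =>
    if F v ∧ u = x then some (ν v) else if F u ∧ v = x then some (ν u) else p.f u v with hg
  have gdef : ∀ u v, g u v =
      (if F v ∧ u = x then some (ν v) else if F u ∧ v = x then some (ν u) else p.f u v) :=
    fun u v => rfl
  have gxfan : ∀ v, F v → g x v = some (ν v) := by
    intro v hv; rw [gdef, if_pos ⟨hv, rfl⟩]
  have gfanx : ∀ u, F u → g u x = some (ν u) := by
    intro u hu; rw [gdef, if_neg (fun h => hFx h.1), if_pos ⟨hu, rfl⟩]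
  have gxo : ∀ v, ¬ F v → g x v = p.f x v := by
    intro v hv; rw [gdef, if_neg (fun h => hv h.1), if_neg (fun h => hFx h.1)]
  have go : ∀ u v, u ≠ x → ¬ (F u ∧ v = x) → g u v = p.f u v := by
    intro u v hu h2; rw [gdef, if_neg (fun h => hu h.2), if_neg h2]
  -- ν is "free" in the appropriate senses
  have nu_inj : ∀ m, m ≤ k → ∀ m', m' ≤ k → ν (y m) = ν (y m') → m = m' := by
    intro m hm m' hm' hmm
    rw [nu_spec m hm, nu_spec m' hm'] at hmm
    by_cases h1 : m < k <;> by_cases h2 : m' < k <;> simp only [h1, h2, if_pos, if_neg, if_true, if_false] at hmm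
    · exact binj m h1 m' h2 hmm
    · exact absurd hmm (bneγ m h1)
    · exact absurd hmm.symm (bneγ m' h2)
    · omega
  have nu_notold_x : ∀ m, m ≤ k → ∀ w, ¬ F w → p.f x w ≠ some (ν (y m)) := by
    intro m hm w hw hc
    rw [nu_spec m hm] at hc
    by_cases h1 : m < k
    · rw [if_pos h1] at hc
      have := p.proper x w (y (m+1)) (b m) hc (hcol m h1)
      exact hw (this ▸ hFy (m+1) (by omega))
    · rw [if_neg h1] at hc
      exact hγx w hc
  have nu_free : ∀ m, m ≤ k → p.Free (y m) (ν (y m)) := by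
    intro m hm
    rw [nu_spec m hm]
    by_cases h1 : m < k
    · rw [if_pos h1]; exact hfree m h1
    · rw [if_neg h1]
      have : m = k := by omega
      rw [this]; exact hγk
  refine ⟨⟨g, ?_, ?_, ?_, ?_⟩, ?_, ?_⟩
  · -- symm
    intro u v
    by_cases c1 : F v ∧ u = x
    · rw [c1.2, gxfan v c1.1, gfanx v c1.1]
    · by_cases c2 : F u ∧ v = x
      · rw [c2.2, gfanx u c2.1, gxfan u c2.1]
      · by_cases hu : u = x
        · rw [hu]
          have hFv : ¬ F v := fun h => c1 ⟨h, hu⟩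
          by_cases hvx : v = x
          · rw [hvx]
          · rw [gxo v hFv, go v x hvx (fun h => hFv h.1)]
            exact p.symm x v
        · rw [go u v hu c2]
          by_cases hv : v = x
          · rw [hv, gxo u (fun h => c2 ⟨h, hv⟩)]
            exact p.symm u x
          · rw [go v u hv (fun h => hu h.2)]
            exact p.symm u v
  · -- adj
    intro u v c hc
    rw [gdef] at hc
    by_cases h1 : F v ∧ u = x
    · obtain ⟨m, hm, hym⟩ := h1.1
      rw [h1.2, ← hym]
      exact hyadj m hm
    · by_cases h2 : F u ∧ v = x
      · obtain ⟨m, hm, hym⟩ := h2.1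
        rw [h2.2, ← hym]
        exact (hyadj m hm).symm
      · rw [if_neg h1, if_neg h2] at hc
        exact p.adj u v c hc
  · -- lt
    intro u v c hc
    rw [gdef] at hc
    by_cases h1 : F v ∧ u = x
    · rw [if_pos h1] at hc
      exact (Option.some_inj.mp hc) ▸ nu_lt v
    · by_cases h2 : F u ∧ v = x
      · rw [if_neg h1, if_pos h2] at hc
        exact (Option.some_inj.mp hc) ▸ nu_lt u
      · rw [if_neg h1, if_neg h2] at hc
        exact p.lt u v c hc
  · -- proper
    intro u v w c h1 h2
    by_cases hu : u = x
    · rw [hu] at h1 h2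
      by_cases hv : F v <;> by_cases hw : F w
      · rw [gxfan v hv] at h1; rw [gxfan w hw] at h2
        obtain ⟨m, hm, hym⟩ := hv
        obtain ⟨m', hm', hym'⟩ := hw
        subst hym; subst hym'
        rw [← h2] at h1
        exact congrArg y (nu_inj m hm m' hm' (Option.some_inj.mp h1))
      · rw [gxfan v hv] at h1; rw [gxo w hw] at h2
        obtain ⟨m, hm, hym⟩ := hv
        subst hym
        rw [Option.some_inj.mp h1.symm] at h2
        exact absurd h2 (nu_notold_x m hm w hw)
      · rw [gxo v hv] at h1; rw [gxfan w hw] at h2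
        obtain ⟨m, hm, hym⟩ := hw
        subst hym
        rw [Option.some_inj.mp h2.symm] at h1
        exact absurd h1 (nu_notold_x m hm v hv)
      · rw [gxo v hv] at h1; rw [gxo w hw] at h2
        exact p.proper x v w c h1 h2
    · by_cases hv : F u ∧ v = x <;> by_cases hw : F u ∧ w = x
      · rw [hv.2, hw.2]
      · rw [hv.2, gfanx u hv.1] at h1
        rw [go u w hu hw] at h2
        obtain ⟨m, hm, hym⟩ := hv.1
        subst hym
        rw [Option.some_inj.mp h1.symm] at h2
        exact absurd h2 (nu_free m hm w)
      · rw [hw.2, gfanx u hw.1] at h2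
        rw [go u v hu hv] at h1
        obtain ⟨m, hm, hym⟩ := hw.1
        subst hym
        rw [Option.some_inj.mp h2.symm] at h1
        exact absurd h1 (nu_free m hm v)
      · rw [go u v hu hv] at h1
        rw [go u w hu hw] at h2
        exact p.proper u v w c h1 h2
  · -- colors x y0
    show (g x (y 0)).isSome = true
    rw [gxfan (y 0) (hFy 0 (Nat.zero_le _))]
    rfl
  · -- monotone
    intro u v hs
    show (g u v).isSome = true
    rw [gdef]
    by_cases h1 : F v ∧ u = x
    · rw [if_pos h1]; rfl
    · by_cases h2 : F u ∧ v = x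
      · rw [if_neg h1, if_pos h2]; rfl
      · rw [if_neg h1, if_neg h2]
        exact hs
/-- The subgraph of edges colored α or β. -/
def PC.ab {G : SimpleGraph V} {D : ℕ} (p : PC G D) (α β : ℕ) : SimpleGraph V where
  Adj u v := p.f u v = some α ∨ p.f u v = some β
  symm := by
    refine ⟨fun u v h => ?_⟩
    rw [p.symm v u]
    exact h
  loopless := by
    refine ⟨fun u h => ?_⟩
    rcases h with h | h <;> exact G.irrefl (p.adj u u _ h)

lemma PC.swap {G : SimpleGraph V} {D : ℕ} (p : PC G D) (α β : ℕ)
    (hα : α < D + 1) (hβ : β < D + 1) (s : V) (hsβ : p.Free s β) :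
    ∃ q : PC G D,
      (∀ u, ¬ (p.ab α β).Reachable s u → ∀ v, q.f u v = p.f u v) ∧
      (∀ u v, (p.f u v).isSome → (q.f u v).isSome) ∧
      (∀ v c, p.Free v c → c ≠ α → c ≠ β → q.Free v c) ∧
      q.Free s α := by
  classical
  set H := p.ab α β with hH
  have hHadj : ∀ u v, H.Adj u v ↔ (p.f u v = some α ∨ p.f u v = some β) := fun u v => Iff.rfl
  set R : V → Prop := fun u => H.Reachable s u with hR
  have key : ∀ u v, H.Adj u v → (R u → R v) := fun u v h hu => hu.trans h.reachable
  set τ : ℕ → ℕ := fun c => if c = α then β else if c = β then α else c with hτ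
  have τα : τ α = β := by simp [hτ]
  have τβ : τ β = α := by
    by_cases h : β = α <;> simp [hτ, h]
  have τinv : ∀ c, τ (τ c) = c := by
    intro c
    by_cases h1 : c = α
    · rw [h1, τα, τβ]
    · by_cases h2 : c = β
      · rw [h2, τβ, τα]
      · simp only [hτ, if_neg h1, if_neg h2, if_neg h1, if_neg h2]
  have τo : ∀ c, c ≠ α → c ≠ β → τ c = c := by
    intro c h1 h2; simp only [hτ, if_neg h1, if_neg h2]
  have τlt : ∀ c, c < D + 1 → τ c < D + 1 := by
    intro c hc
    by_cases h1 : c = α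
    · rw [h1, τα]; exact hβ
    · by_cases h2 : c = β
      · rw [h2, τβ]; exact hα
      · rw [τo c h1 h2]; exact hc
  set g : V → V → Option ℕ := fun u v =>
    if R u ∧ H.Adj u v then Option.map τ (p.f u v) else p.f u v with hg
  have gdef : ∀ u v, g u v = if R u ∧ H.Adj u v then Option.map τ (p.f u v) else p.f u v :=
    fun _ _ => rfl
  -- characterization used for properness
  have char : ∀ u v c, R u → g u v = some c → p.f u v = some (τ c) := by
    intro u v c hu hc
    rw [gdef] at hc
    by_cases hcond : R u ∧ H.Adj u v
    · rw [if_pos hcond] at hc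
      obtain ⟨c₀, hc₀, hmap⟩ := Option.map_eq_some_iff.mp hc
      rw [hc₀, ← hmap, τinv]
    · rw [if_neg hcond] at hc
      have hna : ¬ H.Adj u v := fun h => hcond ⟨hu, h⟩
      have h1 : c ≠ α := fun h => hna ((hHadj u v).mpr (Or.inl (h ▸ hc)))
      have h2 : c ≠ β := fun h => hna ((hHadj u v).mpr (Or.inr (h ▸ hc)))
      rw [τo c h1 h2]
      exact hc
  have unchanged : ∀ u, ¬ R u → ∀ v, g u v = p.f u v := by
    intro u hu v
    rw [gdef, if_neg (fun h => hu h.1)]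
  refine ⟨⟨g, ?_, ?_, ?_, ?_⟩, unchanged, ?_, ?_, ?_⟩
  · -- symm
    intro u v
    by_cases hcond : R u ∧ H.Adj u v
    · have hcond' : R v ∧ H.Adj v u := ⟨key u v hcond.2 hcond.1, hcond.2.symm⟩
      rw [gdef, gdef, if_pos hcond, if_pos hcond', p.symm u v]
    · have hcond' : ¬ (R v ∧ H.Adj v u) := by
        intro h
        exact hcond ⟨key v u h.2 h.1, h.2.symm⟩
      rw [gdef, gdef, if_neg hcond, if_neg hcond', p.symm u v]
  · -- adj
    intro u v c hc
    rw [gdef] at hc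
    by_cases hcond : R u ∧ H.Adj u v
    · rw [if_pos hcond] at hc
      obtain ⟨c₀, hc₀, _⟩ := Option.map_eq_some_iff.mp hc
      exact p.adj u v c₀ hc₀
    · rw [if_neg hcond] at hc
      exact p.adj u v c hc
  · -- lt
    intro u v c hc
    rw [gdef] at hc
    by_cases hcond : R u ∧ H.Adj u v
    · rw [if_pos hcond] at hc
      obtain ⟨c₀, hc₀, hmap⟩ := Option.map_eq_some_iff.mp hc
      exact hmap ▸ τlt c₀ (p.lt u v c₀ hc₀)
    · rw [if_neg hcond] at hc
      exact p.lt u v c hc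
  · -- proper
    intro u v w c h1 h2
    by_cases hu : R u
    · exact p.proper u v w (τ c) (char u v c hu h1) (char u w c hu h2)
    · rw [unchanged u hu v] at h1
      rw [unchanged u hu w] at h2
      exact p.proper u v w c h1 h2
  · -- monotone
    intro u v hs
    show (g u v).isSome
    rw [gdef]
    by_cases hcond : R u ∧ H.Adj u v
    · rw [if_pos hcond, Option.isSome_map]
      exact hs
    · rw [if_neg hcond]; exact hs
  · -- free colors outside {α, β} preserved
    intro v c hfree h1 h2 u hc0
    have hc : g v u = some c := hc0
    by_cases hv : R v
    · have := char v u c hv hc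
      rw [τo c h1 h2] at this
      exact hfree u this
    · rw [unchanged v hv u] at hc
      exact hfree u hc
  · -- α free at s
    intro u hc0
    have hc : g s u = some α := hc0
    have hs : R s := Reachable.refl s
    have := char s u α hs hc
    rw [τα] at this
    exact hsβ u this

lemma threeEnds_aux {W : Type} (H : SimpleGraph W)
    (deg2 : ∀ v u1 u2 u3, H.Adj v u1 → H.Adj v u2 → H.Adj v u3 → u1 = u2 ∨ u1 = u3 ∨ u2 = u3) :
    ∀ n : ℕ, ∀ d b c : W, ∀ p : H.Walk d b, ∀ q : H.Walk d c,
      p.length + q.length ≤ n → p.IsPath → q.IsPath → b ≠ c →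
      (∀ z z', H.Adj b z → H.Adj b z' → z = z') →
      (∀ z z', H.Adj c z → H.Adj c z' → z = z') →
      ∀ prev, H.Adj prev d → prev ∉ p.support → prev ∉ q.support → False := by
  intro n
  induction n with
  | zero =>
    intro d b c p q hlen _ _ hbc _ _ prev _ _ _
    cases p with
    | nil =>
      cases q with
      | nil => exact hbc rfl
      | cons h q' => simp [Walk.length_cons] at hlen
    | cons h p' => simp [Walk.length_cons] at hlen
  | succ n ih =>
    intro d b c p q hlen hp hq hbc db dc prev hadj hps hqs
    cases p with
    | nil =>
      cases q with
      | nil => exact hbc rfl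
      | cons h₂ q' =>
        rename_i e₂
        have he : prev = e₂ := db prev e₂ hadj.symm h₂
        apply hqs
        rw [Walk.support_cons, he]
        exact List.mem_cons_of_mem _ q'.start_mem_support
    | cons h₁ p' =>
      rename_i e₁
      cases q with
      | nil =>
        have he : prev = e₁ := dc prev e₁ hadj.symm h₁
        apply hps
        rw [Walk.support_cons, he]
        exact List.mem_cons_of_mem _ p'.start_mem_support
      | cons h₂ q' =>
        rename_i e₂
        have he₁ : e₁ ≠ prev := by
          intro h
          apply hps
          rw [Walk.support_cons, ← h]
          exact List.mem_cons_of_mem _ p'.start_mem_support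
        have he₂ : e₂ ≠ prev := by
          intro h
          apply hqs
          rw [Walk.support_cons, ← h]
          exact List.mem_cons_of_mem _ q'.start_mem_support
        have he : e₁ = e₂ := by
          rcases deg2 d e₁ e₂ prev h₁ h₂ hadj.symm with h | h | h
          · exact h
          · exact absurd h he₁
          · exact absurd h he₂
        subst he
        have hp' := (Walk.cons_isPath_iff _ _).mp hp
        have hq' := (Walk.cons_isPath_iff _ _).mp hq
        refine ih e₁ b c p' q' ?_ hp'.1 hq'.1 hbc db dc d h₁ hp'.2 hq'.2
        simp only [Walk.length_cons] at hlen
        omega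

lemma threeEnds {W : Type} (H : SimpleGraph W)
    (deg2 : ∀ v u1 u2 u3, H.Adj v u1 → H.Adj v u2 → H.Adj v u3 → u1 = u2 ∨ u1 = u3 ∨ u2 = u3)
    (a b c : W) (hab : a ≠ b) (hac : a ≠ c) (hbc : b ≠ c)
    (da : ∀ z z', H.Adj a z → H.Adj a z' → z = z')
    (db : ∀ z z', H.Adj b z → H.Adj b z' → z = z')
    (dc : ∀ z z', H.Adj c z → H.Adj c z' → z = z')
    (h1 : H.Reachable a b) (h2 : H.Reachable a c) : False := by
  classical
  obtain ⟨w1⟩ := h1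
  obtain ⟨w2⟩ := h2
  obtain ⟨p, hp⟩ : ∃ p : H.Walk a b, p.IsPath := ⟨(w1.toPath : H.Path a b).1, (w1.toPath).2⟩
  obtain ⟨q, hq⟩ : ∃ q : H.Walk a c, q.IsPath := ⟨(w2.toPath : H.Path a c).1, (w2.toPath).2⟩
  cases p with
  | nil => exact hab rfl
  | cons h₁ p' =>
    rename_i d₁
    cases q with
    | nil => exact hac rfl
    | cons h₂ q' =>
      rename_i d₂
      have he : d₁ = d₂ := da d₁ d₂ h₁ h₂
      subst he
      have hp' := (Walk.cons_isPath_iff _ _).mp hp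
      have hq' := (Walk.cons_isPath_iff _ _).mp hq
      exact threeEnds_aux H deg2 (p'.length + q'.length) d₁ b c p' q' le_rfl
        hp'.1 hq'.1 hbc db dc a h₁ hp'.2 hq'.2

lemma PC.extend {G : SimpleGraph V} [DecidableRel G.Adj] {D : ℕ} (hD : ∀ v, G.degree v ≤ D)
    (p : PC G D) (x y₀ : V) (hadj : G.Adj x y₀) :
    ∃ q : PC G D, (q.f x y₀).isSome ∧ ∀ u v, (p.f u v).isSome → (q.f u v).isSome := by
  classical
  by_cases hxy : (p.f x y₀).isSome
  · exact ⟨p, hxy, fun u v h => h⟩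
  have hxynone : p.f x y₀ = none := Option.not_isSome_iff_eq_none.mp hxy
  choose fc hfc1 hfc2 using p.free_exists hD
  set α := fc x with hαdef
  set IsFan : ℕ → (ℕ → V) → Prop := fun k y =>
    y 0 = y₀ ∧ (∀ m, m ≤ k → G.Adj x (y m)) ∧
    (∀ m, m ≤ k → ∀ m', m' ≤ k → y m = y m' → m = m') ∧
    (∀ m, m < k → p.f x (y (m+1)) = some (fc (y m))) with hIsFan
  have fan0 : IsFan 0 (fun _ => y₀) := by
    refine ⟨rfl, fun m _ => hadj, fun m hm m' hm' _ => by omega, fun m hm => by omega⟩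
  have step : ∀ n : ℕ, ∃ k y, IsFan k y ∧
      ((∀ z, p.f x z = some (fc (y k)) → ∃ m, m ≤ k ∧ y m = z) ∨ n ≤ k) := by
    intro n
    induction n with
    | zero => exact ⟨0, fun _ => y₀, fan0, Or.inr (Nat.zero_le _)⟩
    | succ n ihn =>
      obtain ⟨k, y, hfan, hor⟩ := ihn
      rcases hor with hmax | hn
      · exact ⟨k, y, hfan, Or.inl hmax⟩
      · by_cases hmax : ∀ z, p.f x z = some (fc (y k)) → ∃ m, m ≤ k ∧ y m = z
        · exact ⟨k, y, hfan, Or.inl hmax⟩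
        · push_neg at hmax
          obtain ⟨z, hz, hznot⟩ := hmax
          obtain ⟨hy0, hyadj, hinj, hcol⟩ := hfan
          refine ⟨k+1, fun m => if m ≤ k then y m else z, ⟨?_, ?_, ?_, ?_⟩, Or.inr (by omega)⟩
          · simp only [Nat.zero_le, if_pos]; exact hy0
          · intro m hm
            by_cases h : m ≤ k
            · simpa only [if_pos h] using hyadj m h
            · simp only [if_neg h]
              exact p.adj x z _ hz
          · intro m hm m' hm' hmm
            by_cases h : m ≤ k <;> by_cases h' : m' ≤ k
            · simp only [if_pos h, if_pos h'] at hmm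
              exact hinj m h m' h' hmm
            · simp only [if_pos h, if_neg h'] at hmm
              exact (hznot m h hmm).elim
            · simp only [if_neg h, if_pos h'] at hmm
              exact (hznot m' h' hmm.symm).elim
            · omega
          · intro m hm
            by_cases h : m < k
            · have h1 : m + 1 ≤ k := by omega
              have h2 : m ≤ k := by omega
              simp only [if_pos h1, if_pos h2]
              exact hcol m h
            · have hmk : m = k := by omega
              simp only [if_neg (by omega : ¬ (m+1 ≤ k)), if_pos (by omega : m ≤ k)]
              rw [hmk]
              exact hz
  -- extract a maximal fan
  obtain ⟨k, y, hfan, hor⟩ := step (Fintype.card V)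
  obtain ⟨hy0, hyadj, hinj, hcol⟩ := hfan
  have hmax : ∀ z, p.f x z = some (fc (y k)) → ∃ m, m ≤ k ∧ y m = z := by
    rcases hor with hmax | hn
    · exact hmax
    · exfalso
      have hcardle : k + 1 ≤ Fintype.card V := by
        have : Function.Injective (fun m : Fin (k+1) => y m) := by
          intro m m' hmm
          exact Fin.ext (hinj m (by omega) m' (by omega) hmm)
        simpa using Fintype.card_le_of_injective _ this
      omega
  set β := fc (y k) with hβdef
  have hβfree : p.Free (y k) β := hfc2 (y k)
  have hβlt : β < D + 1 := hfc1 (y k)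
  have hαfree : p.Free x α := hfc2 x
  have hαlt : α < D + 1 := hfc1 x
  set b : ℕ → ℕ := fun m => fc (y m) with hbdef
  have hbfree : ∀ m, m < k → p.Free (y m) (b m) := fun m _ => hfc2 (y m)
  by_cases hfxβ : p.Free x β
  · -- Case 1 : rotate the whole fan with β
    obtain ⟨q, hq1, hq2⟩ := p.rotate x k y b hyadj hinj hcol hbfree β hβlt hfxβ hβfree
    rw [hy0] at hq1
    exact ⟨q, hq1, hq2⟩
  · -- Case 2
    simp only [PC.Free] at hfxβ
    push_neg at hfxβ
    obtain ⟨z, hz⟩ := hfxβ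
    obtain ⟨m₀, hm₀le, hym₀⟩ := hmax z hz
    have hm₀pos : m₀ ≠ 0 := by
      intro h
      rw [h, hy0] at hym₀
      rw [← hym₀, hxynone] at hz
      exact Option.some_ne_none _ hz.symm
    set j := m₀ - 1 with hjdef
    have hjk : j < k := by omega
    have hβj : fc (y j) = β := by
      have h1 : p.f x (y (j+1)) = some (fc (y j)) := hcol j hjk
      have h2 : j + 1 = m₀ := by omega
      rw [h2, hym₀, hz] at h1
      exact (Option.some_inj.mp h1).symm
    have hβfreej : p.Free (y j) β := hβj ▸ hfc2 (y j)
    -- the α/β graph H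
    have deg2 : ∀ v u1 u2 u3, (p.ab α β).Adj v u1 → (p.ab α β).Adj v u2 →
        (p.ab α β).Adj v u3 → u1 = u2 ∨ u1 = u3 ∨ u2 = u3 := by
      intro v u1 u2 u3 h1 h2 h3
      rcases h1 with h1|h1 <;> rcases h2 with h2|h2 <;> rcases h3 with h3|h3
      · exact Or.inl (p.proper v u1 u2 _ h1 h2)
      · exact Or.inl (p.proper v u1 u2 _ h1 h2)
      · exact Or.inr (Or.inl (p.proper v u1 u3 _ h1 h3))
      · exact Or.inr (Or.inr (p.proper v u2 u3 _ h2 h3))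
      · exact Or.inr (Or.inr (p.proper v u2 u3 _ h2 h3))
      · exact Or.inr (Or.inl (p.proper v u1 u3 _ h1 h3))
      · exact Or.inl (p.proper v u1 u2 _ h1 h2)
      · exact Or.inl (p.proper v u1 u2 _ h1 h2)
    have dx : ∀ z z', (p.ab α β).Adj x z → (p.ab α β).Adj x z' → z = z' := by
      intro z1 z2 h1 h2
      have e1 : p.f x z1 = some β := by
        rcases h1 with h|h
        · exact absurd h (hαfree z1)
        · exact h
      have e2 : p.f x z2 = some β := by
        rcases h2 with h|h
        · exact absurd h (hαfree z2)
        · exact h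
      exact p.proper x z1 z2 β e1 e2
    have dyj : ∀ z z', (p.ab α β).Adj (y j) z → (p.ab α β).Adj (y j) z' → z = z' := by
      intro z1 z2 h1 h2
      have e1 : p.f (y j) z1 = some α := by
        rcases h1 with h|h
        · exact h
        · exact absurd h (hβfreej z1)
      have e2 : p.f (y j) z2 = some α := by
        rcases h2 with h|h
        · exact h
        · exact absurd h (hβfreej z2)
      exact p.proper (y j) z1 z2 α e1 e2
    have dyk : ∀ z z', (p.ab α β).Adj (y k) z → (p.ab α β).Adj (y k) z' → z = z' := by
      intro z1 z2 h1 h2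
      have e1 : p.f (y k) z1 = some α := by
        rcases h1 with h|h
        · exact h
        · exact absurd h (hβfree z1)
      have e2 : p.f (y k) z2 = some α := by
        rcases h2 with h|h
        · exact h
        · exact absurd h (hβfree z2)
      exact p.proper (y k) z1 z2 α e1 e2
    have hxyj : x ≠ y j := fun h => G.irrefl (h ▸ hyadj j (by omega))
    have hxyk : x ≠ y k := fun h => G.irrefl (h ▸ hyadj k le_rfl)
    have hyjyk : y j ≠ y k := fun h => by
      have := hinj j (by omega) k le_rfl h
      omega
    -- b m is never α; and b m = β only for m = j
    have hbneα : ∀ m, m < k → b m ≠ α := by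
      intro m hm h
      exact hαfree (y (m+1)) (by rw [← h]; exact hcol m hm)
    have hbβ : ∀ m, m < k → b m = β → m = j := by
      intro m hm h
      have h1 : p.f x (y (m+1)) = some β := by rw [← h]; exact hcol m hm
      have h2 : p.f x (y (j+1)) = some β := by rw [← hβj]; exact hcol j hjk
      have := p.proper x (y (m+1)) (y (j+1)) β h1 h2
      have := hinj (m+1) (by omega) (j+1) (by omega) this
      omega
    by_cases hreach : (p.ab α β).Reachable (y j) x
    · -- Case 2b: swap the component of y k
      have hreach2 : ¬ (p.ab α β).Reachable (y k) x := by
        intro h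
        exact threeEnds (p.ab α β) deg2 x (y j) (y k) (Ne.symm (fun h' => hxyj h'.symm)) hxyk hyjyk
          dx dyj dyk hreach.symm h.symm
      have hreachjk : ¬ (p.ab α β).Reachable (y k) (y j) := fun h => hreach2 (h.trans hreach)
      obtain ⟨q₁, hunch, hmono, hfpres, hαfreeq⟩ := p.swap α β hαlt hβlt (y k) hβfree
      have hcol' : ∀ m, m < k → q₁.f x (y (m+1)) = some (b m) := by
        intro m hm
        rw [hunch x hreach2 (y (m+1))]
        exact hcol m hm
      have hfree' : ∀ m, m < k → q₁.Free (y m) (b m) := by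
        intro m hm
        by_cases hb : b m = β
        · have hmj : m = j := hbβ m hm hb
          intro u hu
          rw [hunch (y m) (hmj ▸ hreachjk) u] at hu
          exact (hmj ▸ hβfreej : p.Free (y m) β) u (hb ▸ hu)
        · exact hfpres (y m) (b m) (hbfree m hm) (hbneα m hm) hb
      have hαfx : q₁.Free x α := by
        intro u hu
        rw [hunch x hreach2 u] at hu
        exact hαfree u hu
      obtain ⟨q, hq1, hq2⟩ := q₁.rotate x k y b hyadj hinj hcol' hfree' α hαlt hαfx hαfreeq
      rw [hy0] at hq1
      exact ⟨q, hq1, fun u v h => hq2 u v (hmono u v h)⟩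
    · -- Case 2a: swap the component of y j
      obtain ⟨q₁, hunch, hmono, hfpres, hαfreeq⟩ := p.swap α β hαlt hβlt (y j) hβfreej
      have hcol' : ∀ m, m < j → q₁.f x (y (m+1)) = some (b m) := by
        intro m hm
        rw [hunch x hreach (y (m+1))]
        exact hcol m (by omega)
      have hfree' : ∀ m, m < j → q₁.Free (y m) (b m) := by
        intro m hm
        have hb : b m ≠ β := by
          intro h
          have := hbβ m (by omega) h
          omega
        exact hfpres (y m) (b m) (hbfree m (by omega)) (hbneα m (by omega)) hb
      have hαfx : q₁.Free x α := by
        intro u hu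
        rw [hunch x hreach u] at hu
        exact hαfree u hu
      obtain ⟨q, hq1, hq2⟩ := q₁.rotate x j y b (fun m hm => hyadj m (by omega))
        (fun m hm m' hm' h => hinj m (by omega) m' (by omega) h) hcol' hfree' α hαlt hαfx hαfreeq
      rw [hy0] at hq1
      exact ⟨q, hq1, fun u v h => hq2 u v (hmono u v h)⟩

lemma vizing_all {G : SimpleGraph V} [DecidableRel G.Adj] {D : ℕ} (hD : ∀ v, G.degree v ≤ D) :
    ∃ p : PC G D, ∀ u v, G.Adj u v → (p.f u v).isSome := by
  classical
  suffices h : ∀ s : Finset (V × V), (∀ e ∈ s, G.Adj e.1 e.2) →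
      ∃ p : PC G D, ∀ e ∈ s, (p.f e.1 e.2).isSome by
    obtain ⟨p, hp⟩ := h (Finset.univ.filter (fun e : V × V => G.Adj e.1 e.2))
      (fun e he => (Finset.mem_filter.mp he).2)
    exact ⟨p, fun u v huv => hp (u, v) (Finset.mem_filter.mpr ⟨Finset.mem_univ _, huv⟩)⟩
  intro s
  induction s using Finset.induction_on with
  | empty =>
    intro _
    refine ⟨⟨fun _ _ => none, fun _ _ => rfl, fun u v c h => (nomatch h),
      fun u v c h => (nomatch h), fun u v w c h _ => (nomatch h)⟩, ?_⟩
    intro e he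
    exact absurd he (Finset.notMem_empty e)
  | @insert e s' hnotmem ih =>
    intro hall
    obtain ⟨p, hp⟩ := ih (fun e' he' => hall e' (Finset.mem_insert_of_mem he'))
    obtain ⟨q, hq1, hq2⟩ := p.extend hD e.1 e.2 (hall e (Finset.mem_insert_self _ _))
    refine ⟨q, fun e' he' => ?_⟩
    rcases Finset.mem_insert.mp he' with rfl | h
    · exact hq1
    · exact hq2 _ _ (hp e' h)
def EdgeKColorable {V : Type} (G : SimpleGraph V) (k : ℕ) : Prop :=
  ∃ c : Sym2 V → ℕ, (∀ e ∈ G.edgeSet, c e < k) ∧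
    ∀ e ∈ G.edgeSet, ∀ e' ∈ G.edgeSet, e ≠ e' → (∃ v : V, v ∈ e ∧ v ∈ e') → c e ≠ c e'

lemma edgeKColorable_maxDegree_succ (G : SimpleGraph V) [DecidableRel G.Adj] :
    EdgeKColorable G (G.maxDegree + 1) := by
  classical
  obtain ⟨p, hp⟩ := vizing_all (G := G) (D := G.maxDegree) (fun v => G.degree_le_maxDegree v)
  refine ⟨Sym2.lift ⟨fun u v => (p.f u v).getD 0, ?_⟩, ?_, ?_⟩
  · intro u v; simp only [p.symm u v]
  · intro e he
    induction e using Sym2.ind with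
    | _ u v =>
      rw [SimpleGraph.mem_edgeSet] at he
      obtain ⟨c, hc⟩ := Option.isSome_iff_exists.mp (hp u v he)
      simp only [Sym2.lift_mk]
      rw [hc, Option.getD_some]
      exact p.lt u v c hc
  · rintro e he e' he' hne ⟨v, hv, hv'⟩
    obtain ⟨a, ha⟩ := Sym2.mem_iff_exists.mp hv
    obtain ⟨a', ha'⟩ := Sym2.mem_iff_exists.mp hv'
    subst ha; subst ha'
    rw [SimpleGraph.mem_edgeSet] at he he'
    obtain ⟨c, hc⟩ := Option.isSome_iff_exists.mp (hp v a he)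
    obtain ⟨c', hc'⟩ := Option.isSome_iff_exists.mp (hp v a' he')
    simp only [Sym2.lift_mk]
    rw [hc, hc', Option.getD_some, Option.getD_some]
    intro hcc
    have : a = a' := p.proper v a a' c hc (hcc ▸ hc')
    exact hne (by rw [this])

lemma maxDegree_le_of_edgeKColorable (G : SimpleGraph V) [DecidableRel G.Adj]
    (hV : Nonempty V) {n : ℕ} (h : EdgeKColorable G n) : G.maxDegree ≤ n := by
  classical
  obtain ⟨c, hlt, hproper⟩ := h
  obtain ⟨v, hv⟩ := G.exists_maximal_degree_vertex
  rw [hv, ← SimpleGraph.card_neighborFinset_eq_degree]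
  have hmaps : ∀ u ∈ G.neighborFinset v, c s(v, u) ∈ Finset.range n := by
    intro u hu
    rw [Finset.mem_range]
    exact hlt _ ((SimpleGraph.mem_edgeSet _).mpr ((SimpleGraph.mem_neighborFinset _ _ _).mp hu))
  have hinj : Set.InjOn (fun u => c s(v, u)) (G.neighborFinset v) := by
    intro u hu u' hu' hcc
    by_contra hne
    have hedne : s(v, u) ≠ s(v, u') := fun h => hne (Sym2.congr_right.mp h)
    exact hproper s(v, u) ((SimpleGraph.mem_edgeSet _).mpr ((SimpleGraph.mem_neighborFinset _ _ _).mp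
      (by exact_mod_cast hu))) s(v, u') ((SimpleGraph.mem_edgeSet _).mpr
      ((SimpleGraph.mem_neighborFinset _ _ _).mp (by exact_mod_cast hu'))) hedne
      ⟨v, Sym2.mem_mk_left v u, Sym2.mem_mk_left v u'⟩ hcc
  calc (G.neighborFinset v).card ≤ (Finset.range n).card :=
        Finset.card_le_card_of_injOn _ hmaps hinj
    _ = n := Finset.card_range n

lemma clique_eq_pair {G : SimpleGraph V} (htf : G.CliqueFree 3) {C : Finset V}
    (hC : G.IsClique (C : Set V)) {u v : V} (hu : u ∈ C) (hv : v ∈ C) (huv : G.Adj u v) :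
    C = {u, v} := by
  apply Finset.Subset.antisymm
  · intro w hw
    by_contra hwne
    simp only [Finset.mem_insert, Finset.mem_singleton] at hwne
    push_neg at hwne
    apply htf {u, v, w}
    constructor
    · apply hC.subset
      intro t ht
      simp only [Finset.coe_insert, Finset.coe_singleton, Set.mem_insert_iff,
        Set.mem_singleton_iff] at ht
      rcases ht with rfl | rfl | rfl
      · exact hu
      · exact hv
      · exact hw
    · rw [Finset.card_insert_of_notMem (by simp [huv.ne, Ne.symm hwne.1]),
        Finset.card_insert_of_notMem (by simp [Ne.symm hwne.2]), Finset.card_singleton]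
  · intro w hw
    simp only [Finset.mem_insert, Finset.mem_singleton] at hw
    rcases hw with rfl | rfl
    · exact hu
    · exact hv

lemma exists_sep_edge {G : SimpleGraph V} [DecidableRel G.Adj] (hconn : G.Connected)
    (hcard : 3 ≤ Fintype.card V) {u v : V} (huv : u ≠ v) :
    ∃ w, (G.Adj u w ∧ w ≠ v) ∨ (G.Adj v w ∧ w ≠ u) := by
  classical
  by_contra hno
  push_neg at hno
  have hw : ∃ w, w ≠ u ∧ w ≠ v := by
    have hcle : ({u, v} : Finset V).card ≤ 2 := (Finset.card_insert_le _ _).trans (by simp)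
    have hns : ¬ (Finset.univ ⊆ ({u, v} : Finset V)) := by
      intro hsub
      have := Finset.card_le_card hsub
      rw [Finset.card_univ] at this
      omega
    obtain ⟨w, _, hwmem⟩ := Finset.not_subset.mp hns
    simp only [Finset.mem_insert, Finset.mem_singleton] at hwmem
    push_neg at hwmem
    exact ⟨w, hwmem⟩
  obtain ⟨w, hwu, hwv⟩ := hw
  have hwalk : ∀ a b (p : G.Walk a b), a = u ∨ a = v → b = u ∨ b = v := by
    intro a b p
    induction p with
    | nil => exact id
    | cons h q ihq =>
      intro ha
      apply ihq
      rcases ha with rfl | rfl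
      · exact Or.inr ((hno _).1 h)
      · exact Or.inl ((hno _).2 h)
  obtain ⟨pw⟩ := hconn.preconnected u w
  rcases hwalk u w pw (Or.inl rfl) with h | h
  · exact hwu h
  · exact hwv h

lemma edge_of_sepEq {G : SimpleGraph V} [DecidableRel G.Adj] (htf : G.CliqueFree 3) {k : ℕ}
    (h : ∃ 𝒞 : Finset (Finset V), SepEqCover G k 𝒞) : EdgeKColorable G k := by
  classical
  obtain ⟨𝒞, hcl, hcov, ⟨c, hclt, hcdist⟩, hsep⟩ := h
  have hpair : ∀ u v : V, G.Adj u v → ({u, v} : Finset V) ∈ 𝒞 := by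
    intro u v huv
    obtain ⟨C, hC, huC, hvC⟩ := hcov u v huv
    have := clique_eq_pair htf (hcl C hC) huC hvC huv
    rwa [this] at hC
  refine ⟨Sym2.lift ⟨fun u v => c {u, v}, fun u v => by show c {u, v} = c {v, u}; rw [Finset.pair_comm]⟩, ?_, ?_⟩
  · intro e he
    induction e using Sym2.ind with
    | _ u v =>
      rw [SimpleGraph.mem_edgeSet] at he
      simpa using hclt _ (hpair u v he)
  · rintro e he e' he' hne ⟨v, hv, hv'⟩
    obtain ⟨a, ha⟩ := Sym2.mem_iff_exists.mp hv
    obtain ⟨a', ha'⟩ := Sym2.mem_iff_exists.mp hv'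
    subst ha; subst ha'
    rw [SimpleGraph.mem_edgeSet] at he he'
    simp only [Sym2.lift_mk]
    have hCD : ({v, a} : Finset V) ≠ {v, a'} := by
      intro hq
      apply hne
      have ha2 : a ∈ ({v, a'} : Finset V) := hq ▸ (by simp)
      simp only [Finset.mem_insert, Finset.mem_singleton] at ha2
      rcases ha2 with rfl | rfl
      · exact (G.irrefl he).elim
      · rfl
    exact hcdist _ (hpair v a he) _ (hpair v a' he') hCD
      ⟨v, Finset.mem_inter.mpr ⟨by simp, by simp⟩⟩

lemma sepEq_of_edge {G : SimpleGraph V} [DecidableRel G.Adj] (hconn : G.Connected)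
    (hcard : 3 ≤ Fintype.card V) {k : ℕ} (h : EdgeKColorable G k) :
    ∃ 𝒞 : Finset (Finset V), SepEqCover G k 𝒞 := by
  classical
  obtain ⟨ecol, hlt, hprop⟩ := h
  set 𝒞 : Finset (Finset V) :=
    (Finset.univ.filter (fun p : V × V => G.Adj p.1 p.2)).image
      (fun p : V × V => ({p.1, p.2} : Finset V)) with h𝒞
  have hmem : ∀ C ∈ 𝒞, ∃ p : V × V, G.Adj p.1 p.2 ∧ C = {p.1, p.2} := by
    intro C hC
    rw [h𝒞] at hC
    obtain ⟨p, hp, hpc⟩ := Finset.mem_image.mp hC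
    exact ⟨p, (Finset.mem_filter.mp hp).2, hpc.symm⟩
  have hmem' : ∀ (u v : V), G.Adj u v → ({u, v} : Finset V) ∈ 𝒞 := by
    intro u v huv
    rw [h𝒞]
    exact Finset.mem_image.mpr ⟨(u, v), Finset.mem_filter.mpr ⟨Finset.mem_univ _, huv⟩, rfl⟩
  have hcliques : ∀ C ∈ 𝒞, G.IsClique (C : Set V) := by
    intro C hC
    obtain ⟨p, hadj, rfl⟩ := hmem C hC
    have hco : ((({p.1, p.2} : Finset V) : Set V)) = {p.1, p.2} := by simp
    rw [hco]
    exact SimpleGraph.isClique_pair.mpr (fun _ => hadj)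
  set col : Finset V → ℕ := fun C =>
    if h : ∃ p : V × V, G.Adj p.1 p.2 ∧ C = {p.1, p.2} then ecol s(h.choose.1, h.choose.2)
    else 0 with hcol
  have colspec : ∀ (C : Finset V) (hex : ∃ p : V × V, G.Adj p.1 p.2 ∧ C = {p.1, p.2}),
      col C = ecol s(hex.choose.1, hex.choose.2) := by
    intro C hex
    simp only [hcol]
    rw [dif_pos hex]
  have toFin : ∀ (a b a' b' : V), s(a, b) = s(a', b') → ({a, b} : Finset V) = {a', b'} := by
    intro a b a' b' hq
    rcases Sym2.eq_iff.mp hq with ⟨rfl, rfl⟩ | ⟨rfl, rfl⟩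
    · rfl
    · exact Finset.pair_comm _ _
  refine ⟨𝒞, hcliques, ?_, ⟨col, ?_, ?_⟩, ?_⟩
  · intro u v huv
    exact ⟨{u, v}, hmem' u v huv, by simp, by simp⟩
  · intro C hC
    have hex := hmem C hC
    rw [colspec C hex]
    exact hlt _ ((SimpleGraph.mem_edgeSet _).mpr hex.choose_spec.1)
  · intro C hC D hD hne hinter
    have hexC := hmem C hC
    have hexD := hmem D hD
    rw [colspec C hexC, colspec D hexD]
    have hCrep := hexC.choose_spec.2
    have hDrep := hexD.choose_spec.2
    have hedne : s(hexC.choose.1, hexC.choose.2) ≠ s(hexD.choose.1, hexD.choose.2) := by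
      intro hq
      exact hne (by rw [hCrep, hDrep]; exact toFin _ _ _ _ hq)
    obtain ⟨w, hw⟩ := hinter
    obtain ⟨hw1, hw2⟩ := Finset.mem_inter.mp hw
    have hw1' : w ∈ s(hexC.choose.1, hexC.choose.2) := by
      rw [hCrep] at hw1
      simp only [Finset.mem_insert, Finset.mem_singleton] at hw1
      exact Sym2.mem_iff.mpr hw1
    have hw2' : w ∈ s(hexD.choose.1, hexD.choose.2) := by
      rw [hDrep] at hw2
      simp only [Finset.mem_insert, Finset.mem_singleton] at hw2
      exact Sym2.mem_iff.mpr hw2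
    exact hprop _ ((SimpleGraph.mem_edgeSet _).mpr hexC.choose_spec.1) _
      ((SimpleGraph.mem_edgeSet _).mpr hexD.choose_spec.1) hedne ⟨w, hw1', hw2'⟩
  · intro u v huv
    obtain ⟨w, hcase⟩ := exists_sep_edge hconn hcard huv
    rcases hcase with ⟨hadj, hwv⟩ | ⟨hadj, hwu⟩
    · refine ⟨{u, w}, hmem' u w hadj, Or.inl ⟨by simp, ?_⟩⟩
      intro hv
      rcases Finset.mem_insert.mp hv with rfl | hv2
      · exact huv rfl
      · rw [Finset.mem_singleton] at hv2
        exact hwv hv2.symm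
    · refine ⟨{v, w}, hmem' v w hadj, Or.inr ⟨by simp, ?_⟩⟩
      intro hu
      rcases Finset.mem_insert.mp hu with rfl | hu2
      · exact huv rfl
      · rw [Finset.mem_singleton] at hu2
        exact hwu hu2.symm

lemma cliqueKCover_exists (G : SimpleGraph V) [DecidableRel G.Adj] :
    ∃ 𝒞 : Finset (Finset V), CliqueKCover G G.maxDegree 𝒞 := by
  classical
  set 𝒞 : Finset (Finset V) :=
    (Finset.univ.filter (fun p : V × V => G.Adj p.1 p.2)).image
      (fun p : V × V => ({p.1, p.2} : Finset V)) with h𝒞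
  have hmem : ∀ C ∈ 𝒞, ∃ p : V × V, G.Adj p.1 p.2 ∧ C = {p.1, p.2} := by
    intro C hC
    rw [h𝒞] at hC
    obtain ⟨p, hp, hpc⟩ := Finset.mem_image.mp hC
    exact ⟨p, (Finset.mem_filter.mp hp).2, hpc.symm⟩
  have hmem' : ∀ (u v : V), G.Adj u v → ({u, v} : Finset V) ∈ 𝒞 := by
    intro u v huv
    rw [h𝒞]
    exact Finset.mem_image.mpr ⟨(u, v), Finset.mem_filter.mpr ⟨Finset.mem_univ _, huv⟩, rfl⟩
  refine ⟨𝒞, ?_, ?_, ?_⟩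
  · intro C hC
    obtain ⟨p, hadj, rfl⟩ := hmem C hC
    have hco : ((({p.1, p.2} : Finset V) : Set V)) = {p.1, p.2} := by simp
    rw [hco]
    exact SimpleGraph.isClique_pair.mpr (fun _ => hadj)
  · intro u v huv
    exact ⟨{u, v}, hmem' u v huv, by simp, by simp⟩
  · intro v
    have hsub : 𝒞.filter (fun C => v ∈ C) ⊆
        (G.neighborFinset v).image (fun z => ({v, z} : Finset V)) := by
      intro C hC
      obtain ⟨hC𝒞, hvC⟩ := Finset.mem_filter.mp hC
      obtain ⟨p, hadj, rfl⟩ := hmem C hC𝒞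
      simp only [Finset.mem_insert, Finset.mem_singleton] at hvC
      rcases hvC with rfl | rfl
      · exact Finset.mem_image.mpr ⟨p.2, (SimpleGraph.mem_neighborFinset _ _ _).mpr hadj, rfl⟩
      · exact Finset.mem_image.mpr ⟨p.1, (SimpleGraph.mem_neighborFinset _ _ _).mpr hadj.symm,
          (Finset.pair_comm _ _)⟩
    calc (𝒞.filter (fun C => v ∈ C)).card
        ≤ ((G.neighborFinset v).image (fun z => ({v, z} : Finset V))).card :=
          Finset.card_le_card hsub
      _ ≤ (G.neighborFinset v).card := Finset.card_image_le
      _ = G.degree v := SimpleGraph.card_neighborFinset_eq_degree _ _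
      _ ≤ G.maxDegree := G.degree_le_maxDegree v

lemma maxDegree_le_of_cliqueKCover {G : SimpleGraph V} [DecidableRel G.Adj] (hne : Nonempty V)
    (htf : G.CliqueFree 3) {k : ℕ} (h : ∃ 𝒞 : Finset (Finset V), CliqueKCover G k 𝒞) :
    G.maxDegree ≤ k := by
  classical
  obtain ⟨𝒞, hcl, hcov, hcnt⟩ := h
  obtain ⟨v, hv⟩ := G.exists_maximal_degree_vertex
  rw [hv, ← SimpleGraph.card_neighborFinset_eq_degree]
  have hmaps : ∀ z ∈ G.neighborFinset v, ({v, z} : Finset V) ∈ 𝒞.filter (fun C => v ∈ C) := by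
    intro z hz
    have hadj := (SimpleGraph.mem_neighborFinset _ _ _).mp hz
    obtain ⟨C, hC, hvC, hzC⟩ := hcov v z hadj
    have hrep := clique_eq_pair htf (hcl C hC) hvC hzC hadj
    rw [← hrep]
    exact Finset.mem_filter.mpr ⟨hC, hvC⟩
  have hinj : Set.InjOn (fun z => ({v, z} : Finset V)) (G.neighborFinset v) := by
    intro z hz z' hz' hq
    have hq' : ({v, z} : Finset V) = {v, z'} := hq
    have hz2 : z ∈ ({v, z'} : Finset V) := hq' ▸ (by simp)
    simp only [Finset.mem_insert, Finset.mem_singleton] at hz2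
    rcases hz2 with rfl | h
    · exact absurd ((SimpleGraph.mem_neighborFinset _ _ _).mp (by exact_mod_cast hz))
        (G.irrefl)
    · exact h
  calc (G.neighborFinset v).card ≤ (𝒞.filter (fun C => v ∈ C)).card :=
        Finset.card_le_card_of_injOn _ hmaps hinj
    _ ≤ k := hcnt v

/-- For a connected triangle-free graph on at least 3 vertices, the Prague dimension of the
complement (minimal `k` with a separating equivalent `k`-cover) equals the edge chromatic
number `χ'(G)`; consequently `G` is fractal iff `G` is of class 2, i.e. `χ'(G) = Δ(G)+1`. -/
theorem stmt_5 {V : Type} [Fintype V] [DecidableEq V] (G : SimpleGraph V)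
    [DecidableRel G.Adj] (hconn : G.Connected) (hcard : 3 ≤ Fintype.card V)
    (htf : G.CliqueFree 3) :
    sInf {k : ℕ | ∃ 𝒞 : Finset (Finset V), SepEqCover G k 𝒞} =
        sInf {k : ℕ | EdgeKColorable G k} ∧
      (sInf {k : ℕ | ∃ 𝒞 : Finset (Finset V), CliqueKCover G k 𝒞} <
          sInf {k : ℕ | ∃ 𝒞 : Finset (Finset V), SepEqCover G k 𝒞} ↔
        sInf {k : ℕ | EdgeKColorable G k} = G.maxDegree + 1) := by
  classical
  have hne : Nonempty V := Fintype.card_pos_iff.mp (by omega)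
  have hSetEq : {k : ℕ | ∃ 𝒞 : Finset (Finset V), SepEqCover G k 𝒞} =
      {k : ℕ | EdgeKColorable G k} := by
    ext k
    exact ⟨fun h => edge_of_sepEq htf h, fun h => sepEq_of_edge hconn hcard h⟩
  have hviz : EdgeKColorable G (G.maxDegree + 1) := edgeKColorable_maxDegree_succ G
  have hEne : {k : ℕ | EdgeKColorable G k}.Nonempty := ⟨_, hviz⟩
  have hchi_mem : EdgeKColorable G (sInf {k : ℕ | EdgeKColorable G k}) := Nat.sInf_mem hEne
  have hchi_le : sInf {k : ℕ | EdgeKColorable G k} ≤ G.maxDegree + 1 :=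
    Nat.sInf_le (show (G.maxDegree + 1) ∈ {k : ℕ | EdgeKColorable G k} from hviz)
  have hchi_ge : G.maxDegree ≤ sInf {k : ℕ | EdgeKColorable G k} :=
    maxDegree_le_of_edgeKColorable G hne hchi_mem
  have hRle : sInf {k : ℕ | ∃ 𝒞 : Finset (Finset V), CliqueKCover G k 𝒞} ≤ G.maxDegree :=
    Nat.sInf_le (show G.maxDegree ∈ {k : ℕ | ∃ 𝒞 : Finset (Finset V), CliqueKCover G k 𝒞} from
      cliqueKCover_exists G)
  have hRge : G.maxDegree ≤ sInf {k : ℕ | ∃ 𝒞 : Finset (Finset V), CliqueKCover G k 𝒞} :=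
    maxDegree_le_of_cliqueKCover hne htf
      (Nat.sInf_mem (s := {k : ℕ | ∃ 𝒞 : Finset (Finset V), CliqueKCover G k 𝒞})
        ⟨G.maxDegree, cliqueKCover_exists G⟩)
  have hReq : sInf {k : ℕ | ∃ 𝒞 : Finset (Finset V), CliqueKCover G k 𝒞} = G.maxDegree :=
    le_antisymm hRle hRge
  refine ⟨by rw [hSetEq], ?_⟩
  rw [hSetEq, hReq]
  constructor
  · intro h; omega
  · intro h; omega
end

section
/- Connected bipartite graphs (in particular, trees) with at least 3 vertices are not fractal: their rank dimension equals dim_P of the complement, both equal to Δ(G). -/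
open SimpleGraph

section Koenig

variable {V : Type} [Fintype V] [DecidableEq V]

/-- A proper edge coloring with colors `< k`. -/
def GoodEC (G : SimpleGraph V) (k : ℕ) (c : Sym2 V → ℕ) : Prop :=
  (∀ x y : V, G.Adj x y → c s(x, y) < k) ∧
  (∀ x y z : V, G.Adj x y → G.Adj x z → y ≠ z → c s(x, y) ≠ c s(x, z))

private lemma fin2_cases {x y : Fin 2} (h : x ≠ y) (z : Fin 2) : z = x ∨ z = y := by
  fin_cases x <;> fin_cases y <;> fin_cases z <;> simp_all

private lemma fin2_eq {p q r : Fin 2} (h1 : p ≠ r) (h2 : q ≠ r) : p = q := by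
  fin_cases p <;> fin_cases q <;> fin_cases r <;> simp_all

/-- In a digraph with in-degree at most one, a path (in the underlying undirected
graph) from a source to a source must be trivial. -/
private lemma no_path_between_sources {HH : SimpleGraph V} (D : V → V → Prop)
    (hcompat : ∀ x y, HH.Adj x y → D x y ∨ D y x)
    (hindeg : ∀ y z w, D y w → D z w → y = z)
    (u : V) (hu : ∀ y, ¬ D y u) :
    ∀ {x : V} (q : HH.Walk x u), q.IsPath → (∀ y, D y x → y ∉ q.support) → x = u := by
  intro x q
  induction q with
  | nil => intro _ _; rfl
  | @cons x z u h q ih =>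
    intro hp hin
    rcases hcompat x z h with hxz | hzx
    · have hzu : z = u := by
        refine ih hu hp.of_cons ?_
        intro y hy
        have : y = x := hindeg y x z hy hxz
        subst this
        exact (SimpleGraph.Walk.cons_isPath_iff h q).mp hp |>.2
      subst hzu
      exact absurd hxz (hu x)
    · exfalso
      exact hin z hzx (by simp [SimpleGraph.Walk.support_cons,
        SimpleGraph.Walk.start_mem_support])

private lemma pair_eq_cases {x y z w : V} (hxy : x ≠ y)
    (h : ({x, y} : Finset V) = {z, w}) : (z = x ∧ w = y) ∨ (z = y ∧ w = x) := by
  have hz : z = x ∨ z = y := by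
    have : z ∈ ({x, y} : Finset V) := by rw [h]; simp
    simpa using this
  have hw : w = x ∨ w = y := by
    have : w ∈ ({x, y} : Finset V) := by rw [h]; simp
    simpa using this
  have hx : x = z ∨ x = w := by
    have : x ∈ ({z, w} : Finset V) := by rw [← h]; simp
    simpa using this
  have hy : y = z ∨ y = w := by
    have : y ∈ ({z, w} : Finset V) := by rw [← h]; simp
    simpa using this
  tauto

/-- Extending a proper edge coloring of `G - uv` to one of `G`, given a color
missing at both `u` and `v`. -/
private lemma extend_coloring {G : SimpleGraph V} {u v : V} (huv : G.Adj u v)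
    {k : ℕ} {c₀ : Sym2 V → ℕ}
    (hg : GoodEC (G.deleteEdges {s(u, v)}) k c₀) {a : ℕ} (ha : a < k)
    (hau : ∀ y, (G.deleteEdges {s(u, v)}).Adj u y → c₀ s(u, y) ≠ a)
    (hav : ∀ y, (G.deleteEdges {s(u, v)}).Adj v y → c₀ s(v, y) ≠ a) :
    GoodEC G k (Function.update c₀ s(u, v) a) := by
  set G' := G.deleteEdges {s(u, v)} with hG'
  have hadj' : ∀ x y : V, G.Adj x y → s(x, y) ≠ s(u, v) → G'.Adj x y := by
    intro x y hxy hne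
    rw [hG', SimpleGraph.deleteEdges_adj]
    exact ⟨hxy, by simpa using hne⟩
  constructor
  · intro x y hxy
    by_cases h : s(x, y) = s(u, v)
    · rw [h, Function.update_self]; exact ha
    · rw [Function.update_of_ne h]
      exact hg.1 x y (hadj' x y hxy h)
  · intro x y z hxy hxz hyz
    have hyz' : s(x, y) ≠ s(x, z) := by
      intro h
      rcases Sym2.eq_iff.mp h with ⟨-, h2⟩ | ⟨h1, h2⟩
      · exact hyz h2
      · rw [h2] at hxy
        exact G.loopless.irrefl x hxy
    by_cases h1 : s(x, y) = s(u, v)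
    · rw [h1, Function.update_self]
      have h2 : s(x, z) ≠ s(u, v) := by rw [← h1]; exact hyz'.symm
      rw [Function.update_of_ne h2]
      have hxz' : G'.Adj x z := hadj' x z hxz h2
      rcases Sym2.eq_iff.mp h1 with ⟨rfl, rfl⟩ | ⟨rfl, rfl⟩
      · exact fun hc => hau z hxz' hc.symm
      · exact fun hc => hav z hxz' hc.symm
    · rw [Function.update_of_ne h1]
      by_cases h2 : s(x, z) = s(u, v)
      · rw [h2, Function.update_self]
        have hxy' : G'.Adj x y := hadj' x y hxy h1
        rcases Sym2.eq_iff.mp h2 with ⟨rfl, rfl⟩ | ⟨rfl, rfl⟩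
        · exact hau y hxy'
        · exact hav y hxy'
      · rw [Function.update_of_ne h2]
        exact hg.2 x y z (hadj' x y hxy h1) (hadj' x z hxz h2) hyz

/-- König's edge coloring theorem: a bipartite graph with max degree at most `k`
has a proper edge coloring with `k` colors. -/
private lemma koenig_edge_coloring (col : V → Fin 2) :
    ∀ (n : ℕ) (G : SimpleGraph V) [DecidableRel G.Adj], G.edgeFinset.card ≤ n →
    (∀ x y, G.Adj x y → col x ≠ col y) →
    ∀ k, (∀ w, G.degree w ≤ k) → ∃ c, GoodEC G k c := by
  intro n
  induction n with
  | zero =>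
    intro G _ hcard _ k _
    have hnoadj : ∀ x y : V, ¬ G.Adj x y := by
      intro x y hxy
      have h1 : s(x, y) ∈ G.edgeFinset := by
        rw [SimpleGraph.mem_edgeFinset]; exact hxy
      have := Finset.card_pos.mpr ⟨_, h1⟩
      omega
    exact ⟨fun _ => 0, fun x y h => absurd h (hnoadj x y),
      fun x y z h _ _ => absurd h (hnoadj x y)⟩
  | succ n ih =>
    intro G _ hcard hcol k hdeg
    classical
    by_cases hE : G.edgeFinset.card = 0
    · have hnoadj : ∀ x y : V, ¬ G.Adj x y := by
        intro x y hxy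
        have h1 : s(x, y) ∈ G.edgeFinset := by
          rw [SimpleGraph.mem_edgeFinset]; exact hxy
        have := Finset.card_pos.mpr ⟨_, h1⟩
        omega
      exact ⟨fun _ => 0, fun x y h => absurd h (hnoadj x y),
        fun x y z h _ _ => absurd h (hnoadj x y)⟩
    · obtain ⟨e, he⟩ := Finset.card_pos.mp (Nat.pos_of_ne_zero hE)
      induction e using Sym2.ind with
      | _ u v =>
      have huv : G.Adj u v := by rwa [SimpleGraph.mem_edgeFinset, SimpleGraph.mem_edgeSet] at he
      set G' := G.deleteEdges {s(u, v)} with hG'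
      haveI : DecidableRel G'.Adj := fun x y =>
        decidable_of_iff (G.Adj x y ∧ ¬ s(x, y) = s(u, v)) (by
          rw [hG', SimpleGraph.deleteEdges_adj]; simp)
      have hG'adj : ∀ x y : V, G'.Adj x y ↔ G.Adj x y ∧ s(x, y) ≠ s(u, v) := by
        intro x y
        rw [hG', SimpleGraph.deleteEdges_adj]; simp
      -- edge count decreases
      have hedge' : G'.edgeFinset = G.edgeFinset.erase s(u, v) := by
        ext f
        simp only [SimpleGraph.mem_edgeFinset, Finset.mem_erase, hG',
          SimpleGraph.edgeSet_deleteEdges, Set.mem_diff, Set.mem_singleton_iff]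
        tauto
      have hcard' : G'.edgeFinset.card ≤ n := by
        rw [hedge', Finset.card_erase_of_mem he]
        omega
      have hle : ∀ x y : V, G'.Adj x y → G.Adj x y := fun x y h => ((hG'adj x y).mp h).1
      have hdeg' : ∀ w, G'.degree w ≤ k := by
        intro w
        refine le_trans (Finset.card_le_card ?_) (hdeg w)
        intro z hz
        rw [SimpleGraph.mem_neighborFinset] at hz ⊢
        exact hle w z hz
      obtain ⟨c', hc'⟩ := ih G' hcard' (fun x y h => hcol x y (hle x y h)) k hdeg'
      -- missing colors at u and v
      have hmissing : ∀ w₀ w₁ : V, G.Adj w₀ w₁ → s(w₀, w₁) = s(u, v) →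
          ∃ a < k, ∀ y, G'.Adj w₀ y → c' s(w₀, y) ≠ a := by
        intro w₀ w₁ hadj hsy
        set S : Finset ℕ := (G'.neighborFinset w₀).image (fun z => c' s(w₀, z)) with hS
        have hsub : G'.neighborFinset w₀ ⊆ (G.neighborFinset w₀).erase w₁ := by
          intro z hz
          rw [SimpleGraph.mem_neighborFinset, hG'adj] at hz
          rw [Finset.mem_erase, SimpleGraph.mem_neighborFinset]
          refine ⟨?_, hz.1⟩
          intro hzw; subst hzw
          exact hz.2 hsy
        have hScard : S.card < k := by
          have h1 : S.card ≤ G'.degree w₀ := Finset.card_image_le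
          have h2 : G'.degree w₀ ≤ G.degree w₀ - 1 := by
            refine le_trans (Finset.card_le_card hsub) ?_
            rw [Finset.card_erase_of_mem (by
              rw [SimpleGraph.mem_neighborFinset]; exact hadj)]
            rfl
          have h3 : 1 ≤ G.degree w₀ := by
            refine Finset.card_pos.mpr ⟨w₁, ?_⟩
            rw [SimpleGraph.mem_neighborFinset]; exact hadj
          have h4 := hdeg w₀
          omega
        have : ¬ (Finset.range k ⊆ S) := by
          intro hsub'
          have := Finset.card_le_card hsub'
          rw [Finset.card_range] at this
          omega
        obtain ⟨a, hak, haS⟩ := Finset.not_subset.mp this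
        rw [Finset.mem_range] at hak
        refine ⟨a, hak, ?_⟩
        intro y hy hcy
        exact haS (Finset.mem_image.mpr ⟨y, by
          rw [SimpleGraph.mem_neighborFinset]; exact hy, hcy⟩)
      obtain ⟨a, hak, hau⟩ := hmissing u v huv rfl
      obtain ⟨b, hbk, hbv⟩ := hmissing v u huv.symm Sym2.eq_swap
      by_cases hcase : ∀ y, G'.Adj v y → c' s(v, y) ≠ a
      · exact ⟨_, extend_coloring huv hc' hak hau hcase⟩
      -- Kempe chain case
      push_neg at hcase
      obtain ⟨y₀, hy₀, hcy₀⟩ := hcase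
      have hab : a ≠ b := by
        intro h; subst h
        exact hbv y₀ hy₀ hcy₀
      -- the subgraph of edges colored a or b
      set H : SimpleGraph V := {
        Adj := fun x y => G'.Adj x y ∧ (c' s(x, y) = a ∨ c' s(x, y) = b)
        symm := by
          constructor
          intro x y ⟨h1, h2⟩
          exact ⟨h1.symm, by rwa [Sym2.eq_swap]⟩
        loopless := ⟨fun x h => G'.loopless.irrefl x h.1⟩ } with hH
      have hHadj : ∀ x y : V, H.Adj x y ↔
          G'.Adj x y ∧ (c' s(x, y) = a ∨ c' s(x, y) = b) := fun _ _ => Iff.rfl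
      -- orientation
      set D : V → V → Prop := fun x y => H.Adj x y ∧
        ((c' s(x, y) = a ∧ col x = col v) ∨ (c' s(x, y) = b ∧ col x = col u)) with hD
      have hcuv : col u ≠ col v := hcol u v huv
      have hcompat : ∀ x y, H.Adj x y → D x y ∨ D y x := by
        intro x y hxy
        have hxyc : col x ≠ col y := hcol x y (hle x y hxy.1)
        have hx2 : col x = col u ∨ col x = col v := fin2_cases hcuv (col x)
        have hy2 : col y = col u ∨ col y = col v := fin2_cases hcuv (col y)
        have hswap : s(y, x) = s(x, y) := Sym2.eq_swap
        rcases hxy.2 with hca | hcb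
        · rcases hx2 with hx | hx
          · right
            refine ⟨hxy.symm, Or.inl ⟨by rwa [hswap], ?_⟩⟩
            rcases hy2 with hy | hy
            · exact absurd (hx.trans hy.symm) hxyc
            · exact hy
          · exact Or.inl ⟨hxy, Or.inl ⟨hca, hx⟩⟩
        · rcases hx2 with hx | hx
          · exact Or.inl ⟨hxy, Or.inr ⟨hcb, hx⟩⟩
          · right
            refine ⟨hxy.symm, Or.inr ⟨by rwa [hswap], ?_⟩⟩
            rcases hy2 with hy | hy
            · exact hy
            · exact absurd (hx.trans hy.symm) hxyc
      have hindeg : ∀ y z w, D y w → D z w → y = z := by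
        intro y z w hyw hzw
        by_contra hne
        have hy' : G'.Adj w y := hyw.1.1.symm
        have hz' : G'.Adj w z := hzw.1.1.symm
        have hprop := hc'.2 w y z hy' hz' hne
        have hyswap : s(y, w) = s(w, y) := Sym2.eq_swap
        have hzswap : s(z, w) = s(w, z) := Sym2.eq_swap
        have hyc : col y ≠ col w := hcol y w (hle y w hyw.1.1)
        have hzc : col z ≠ col w := hcol z w (hle z w hzw.1.1)
        have hyz : col y = col z := fin2_eq hyc hzc
        rcases hyw.2 with ⟨hca, hcv⟩ | ⟨hcb, hcu⟩
        · rcases hzw.2 with ⟨hca', _⟩ | ⟨hcb', hcu'⟩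
          · rw [hyswap] at hca; rw [hzswap] at hca'
            exact hprop (hca.trans hca'.symm)
          · exact hcuv (((hcu'.symm.trans hyz.symm).trans hcv).symm).symm
        · rcases hzw.2 with ⟨hca', hcv'⟩ | ⟨hcb', _⟩
          · exact hcuv (((hcu.symm.trans hyz).trans hcv').symm).symm
          · rw [hyswap] at hcb; rw [hzswap] at hcb'
            exact hprop (hcb.trans hcb'.symm)
      have husrc : ∀ y, ¬ D y u := by
        intro y ⟨hadj, hor⟩
        have hyc : col y ≠ col u := hcol y u (hle y u hadj.1)
        rcases hor with ⟨hca, hcv⟩ | ⟨_, hcu⟩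
        · have : c' s(u, y) = a := by rwa [Sym2.eq_swap] at hca
          exact hau y hadj.1.symm this
        · exact hyc hcu
      have hvsrc : ∀ y, ¬ D y v := by
        intro y ⟨hadj, hor⟩
        have hyc : col y ≠ col v := hcol y v (hle y v hadj.1)
        rcases hor with ⟨_, hcv⟩ | ⟨hcb, hcu⟩
        · exact hyc hcv
        · have : c' s(v, y) = b := by rwa [Sym2.eq_swap] at hcb
          exact hbv y hadj.1.symm this
      have hnreach : ¬ H.Reachable v u := by
        rintro ⟨p⟩
        have := no_path_between_sources D hcompat hindeg u husrc
          p.bypass p.bypass_isPath (fun y hy _ => hvsrc y hy)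
        exact G.loopless.irrefl u (this ▸ huv)
      -- swap colors a and b on the component of v
      set σ : ℕ → ℕ := fun m => if m = a then b else if m = b then a else m with hσ
      have hσinj : Function.Injective σ := by
        intro m₁ m₂ h
        simp only [hσ] at h
        split_ifs at h <;> omega
      have hσlt : ∀ m, m < k → σ m < k := by
        intro m hm
        simp only [hσ]
        split_ifs <;> omega
      have hσa : ∀ m, σ m = a ↔ m = b := by
        intro m
        simp only [hσ]
        split_ifs with h1 h2 <;> constructor <;> intro h <;> omega
      set c₂ : Sym2 V → ℕ := fun e =>
        if (e ∈ H.edgeSet ∧ ∃ x, x ∈ e ∧ H.Reachable v x) then σ (c' e) else c' e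
        with hc₂
      have hkey : ∀ x y : V, G'.Adj x y →
          c₂ s(x, y) = if H.Reachable v x then σ (c' s(x, y)) else c' s(x, y) := by
        intro x y hxy
        by_cases hH' : H.Adj x y
        · have hiff : (s(x, y) ∈ H.edgeSet ∧ ∃ z, z ∈ s(x, y) ∧ H.Reachable v z) ↔
              H.Reachable v x := by
            constructor
            · rintro ⟨_, z, hz, hr⟩
              rcases Sym2.mem_iff.mp hz with rfl | rfl
              · exact hr
              · exact hr.trans hH'.symm.reachable
            · intro hr
              exact ⟨(SimpleGraph.mem_edgeSet H).mpr hH', x, Sym2.mem_mk_left x y, hr⟩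
          simp only [hc₂]
          rw [if_congr hiff rfl rfl]
        · have hnc : c' s(x, y) ≠ a ∧ c' s(x, y) ≠ b := by
            rw [hHadj] at hH'
            push_neg at hH'
            exact hH' hxy
          have hne : ¬ (s(x, y) ∈ H.edgeSet ∧ ∃ z, z ∈ s(x, y) ∧ H.Reachable v z) := by
            rintro ⟨hmem, -⟩
            exact hH' ((SimpleGraph.mem_edgeSet H).mp hmem)
          have hfix : σ (c' s(x, y)) = c' s(x, y) := by
            simp only [hσ, if_neg hnc.1, if_neg hnc.2]
          simp only [hc₂, if_neg hne]
          split_ifs <;> simp [hfix]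
      have hgood₂ : GoodEC G' k c₂ := by
        constructor
        · intro x y hxy
          rw [hkey x y hxy]
          split_ifs
          · exact hσlt _ (hc'.1 x y hxy)
          · exact hc'.1 x y hxy
        · intro x y z hxy hxz hyz
          rw [hkey x y hxy, hkey x z hxz]
          split_ifs with hr
          · exact fun h => hc'.2 x y z hxy hxz hyz (hσinj h)
          · exact hc'.2 x y z hxy hxz hyz
      have hau₂ : ∀ y, G'.Adj u y → c₂ s(u, y) ≠ a := by
        intro y hy
        rw [hkey u y hy, if_neg hnreach]
        exact hau y hy
      have hav₂ : ∀ y, G'.Adj v y → c₂ s(v, y) ≠ a := by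
        intro y hy
        rw [hkey v y hy, if_pos (SimpleGraph.Reachable.refl v)]
        intro h
        exact hbv y hy ((hσa _).mp h)
      exact ⟨_, extend_coloring huv hgood₂ hak hau₂ hav₂⟩

end Koenig

/-- Connected bipartite graphs with at least 3 vertices are not fractal: the rank dimension
and the Prague dimension of the complement coincide, both being equal to `Δ(G)`. -/
theorem stmt_6 {V : Type} [Fintype V] [DecidableEq V] (G : SimpleGraph V)
    [DecidableRel G.Adj] (hconn : G.Connected) (hcard : 3 ≤ Fintype.card V)
    (hbip : G.Colorable 2) :
    sInf {k : ℕ | ∃ 𝒞 : Finset (Finset V), CliqueKCover G k 𝒞} = G.maxDegree ∧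
    sInf {k : ℕ | ∃ 𝒞 : Finset (Finset V), SepEqCover G k 𝒞} = G.maxDegree := by
  classical
  have hnontriv : Nontrivial V := Fintype.one_lt_card_iff_nontrivial.mp (by omega)
  have hnonempty : Nonempty V := inferInstance
  have htf : G.CliqueFree 3 := hbip.cliqueFree (by omega)
  -- every vertex has a neighbor
  have hpos : ∀ x : V, ∃ y, G.Adj x y := by
    intro x
    obtain ⟨w, hw⟩ := exists_ne x
    obtain ⟨p⟩ := hconn x w
    cases p with
    | nil => exact absurd rfl hw
    | cons h _ => exact ⟨_, h⟩
  -- the cover by edges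
  set 𝒞 : Finset (Finset V) :=
    (Finset.univ.filter fun p : V × V => G.Adj p.1 p.2).image
      (fun p => ({p.1, p.2} : Finset V)) with h𝒞def
  have hmem𝒞 : ∀ C : Finset V, C ∈ 𝒞 ↔ ∃ x y : V, G.Adj x y ∧ C = {x, y} := by
    intro C
    simp only [h𝒞def, Finset.mem_image, Finset.mem_filter, Finset.mem_univ, true_and,
      Prod.exists]
    constructor
    · rintro ⟨x, y, h1, h2⟩; exact ⟨x, y, h1, h2.symm⟩
    · rintro ⟨x, y, h1, h2⟩; exact ⟨x, y, h1, h2.symm⟩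
  have hclique : ∀ C ∈ 𝒞, G.IsClique (C : Set V) := by
    intro C hC
    obtain ⟨x, y, hxy, rfl⟩ := (hmem𝒞 C).mp hC
    rw [Finset.coe_insert, Finset.coe_singleton]
    exact SimpleGraph.isClique_pair.mpr (fun _ => hxy)
  have hcover : ∀ u v : V, G.Adj u v → ∃ C ∈ 𝒞, u ∈ C ∧ v ∈ C := by
    intro u v huv
    exact ⟨{u, v}, (hmem𝒞 _).mpr ⟨u, v, huv, rfl⟩, by simp, by simp⟩
  have hstruct : ∀ C ∈ 𝒞, ∀ t ∈ C, ∃ z, G.Adj t z ∧ C = {t, z} := by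
    intro C hC t ht
    obtain ⟨x, y, hxy, rfl⟩ := (hmem𝒞 C).mp hC
    rcases Finset.mem_insert.mp ht with rfl | ht'
    · exact ⟨y, hxy, rfl⟩
    · rw [Finset.mem_singleton] at ht'
      subst ht'
      exact ⟨x, hxy.symm, Finset.pair_comm x t⟩
  -- count of cliques at each vertex
  have hcount : ∀ w : V, (𝒞.filter (fun C => w ∈ C)).card ≤ G.degree w := by
    intro w
    have hsub : 𝒞.filter (fun C => w ∈ C) ⊆
        (G.neighborFinset w).image (fun z => ({w, z} : Finset V)) := by
      intro C hC
      rw [Finset.mem_filter] at hC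
      obtain ⟨z, hz, rfl⟩ := hstruct C hC.1 w hC.2
      exact Finset.mem_image.mpr ⟨z, by rwa [SimpleGraph.mem_neighborFinset], rfl⟩
    calc (𝒞.filter (fun C => w ∈ C)).card
        ≤ ((G.neighborFinset w).image (fun z => ({w, z} : Finset V))).card :=
          Finset.card_le_card hsub
      _ ≤ (G.neighborFinset w).card := Finset.card_image_le
      _ = G.degree w := rfl
  -- separation
  have hsep : ∀ u v : V, u ≠ v → ∃ C ∈ 𝒞, (u ∈ C ∧ v ∉ C) ∨ (v ∈ C ∧ u ∉ C) := by
    intro u v huv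
    have key : ∃ w : V, (G.Adj u w ∧ w ≠ v) ∨ (G.Adj v w ∧ w ≠ u) := by
      by_cases hadj : G.Adj u v
      · by_contra hno
        push_neg at hno
        have hu' : ∀ w, G.Adj u w → w = v := fun w h => (hno w).1 h
        have hv' : ∀ w, G.Adj v w → w = u := fun w h => (hno w).2 h
        have key2 : ∀ (s t : V) (p : G.Walk s t), (s = u ∨ s = v) → (t = u ∨ t = v) := by
          intro s t p
          induction p with
          | nil => exact id
          | @cons s m t h q ih =>
            intro hs
            apply ih
            rcases hs with rfl | rfl
            · exact Or.inr (hu' m h)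
            · exact Or.inl (hv' m h)
        have hall : ∀ x : V, x = u ∨ x = v := by
          intro x
          obtain ⟨p⟩ := hconn u x
          exact key2 u x p (Or.inl rfl)
        have : (Finset.univ : Finset V) ⊆ {u, v} := by
          intro x _
          rcases hall x with rfl | rfl <;> simp
        have h2 := Finset.card_le_card this
        rw [Finset.card_univ] at h2
        have h3 : ({u, v} : Finset V).card ≤ 2 :=
          le_trans (Finset.card_insert_le u {v}) (by simp)
        omega
      · obtain ⟨w, hw⟩ := hpos u
        refine ⟨w, Or.inl ⟨hw, ?_⟩⟩
        rintro rfl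
        exact hadj hw
    obtain ⟨w, hw | hw⟩ := key
    · refine ⟨{u, w}, (hmem𝒞 _).mpr ⟨u, w, hw.1, rfl⟩, Or.inl ⟨by simp, ?_⟩⟩
      simp only [Finset.mem_insert, Finset.mem_singleton]
      push_neg
      exact ⟨huv.symm, fun h => hw.2 h.symm⟩
    · refine ⟨{v, w}, (hmem𝒞 _).mpr ⟨v, w, hw.1, rfl⟩, Or.inr ⟨by simp, ?_⟩⟩
      simp only [Finset.mem_insert, Finset.mem_singleton]
      push_neg
      exact ⟨huv, fun h => hw.2 h.symm⟩
  -- lower bound machinery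
  obtain ⟨vmax, hvmax⟩ := G.exists_maximal_degree_vertex
  have hlower : ∀ (𝒟 : Finset (Finset V)), (∀ C ∈ 𝒟, G.IsClique (C : Set V)) →
      (∀ u v : V, G.Adj u v → ∃ C ∈ 𝒟, u ∈ C ∧ v ∈ C) →
      ∃ f : V → Finset V, (∀ w, G.Adj vmax w → f w ∈ 𝒟 ∧ vmax ∈ f w ∧ w ∈ f w) ∧
        (∀ w w', G.Adj vmax w → G.Adj vmax w' → w ≠ w' → f w ≠ f w') := by
    intro 𝒟 hcl hcov
    refine ⟨fun w => if h : G.Adj vmax w then (hcov vmax w h).choose else ∅, ?_, ?_⟩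
    · intro w hw
      simp only [dif_pos hw]
      obtain ⟨h1, h2, h3⟩ := (hcov vmax w hw).choose_spec
      exact ⟨h1, h2, h3⟩
    · intro w w' hw hw' hne heq
      simp only [dif_pos hw, dif_pos hw'] at heq
      obtain ⟨hm1, hv1, hw1⟩ := (hcov vmax w hw).choose_spec
      obtain ⟨hm2, hv2, hw2⟩ := (hcov vmax w' hw').choose_spec
      rw [heq] at hv1 hw1
      -- the clique (hcov vmax w' hw').choose contains vmax, w, w' : a triangle
      set C := (hcov vmax w' hw').choose with hC
      have hcliq : G.IsClique (C : Set V) := hcl C hm2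
      have h3 : G.IsNClique 3 {vmax, w, w'} := by
        constructor
        · apply hcliq.subset
          intro z hz
          simp only [Finset.coe_insert, Finset.coe_singleton, Set.mem_insert_iff,
            Set.mem_singleton_iff] at hz
          rcases hz with rfl | rfl | rfl
          · exact hv1
          · exact hw1
          · exact hw2
        · rw [Finset.card_insert_of_notMem, Finset.card_insert_of_notMem,
            Finset.card_singleton]
          · rw [Finset.mem_singleton]
            exact hne
          · simp only [Finset.mem_insert, Finset.mem_singleton]
            push_neg
            exact ⟨hw.ne, hw'.ne⟩
      exact htf _ h3
  constructor
  · -- CliqueKCover part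
    have hmem : G.maxDegree ∈ {k : ℕ | ∃ 𝒞 : Finset (Finset V), CliqueKCover G k 𝒞} := by
      refine ⟨𝒞, hclique, hcover, ?_⟩
      intro w
      exact le_trans (hcount w) (G.degree_le_maxDegree w)
    have hlb : ∀ k ∈ {k : ℕ | ∃ 𝒞 : Finset (Finset V), CliqueKCover G k 𝒞},
        G.maxDegree ≤ k := by
      rintro k ⟨𝒟, hcl, hcov, hcnt⟩
      obtain ⟨f, hf1, hf2⟩ := hlower 𝒟 hcl hcov
      have hinj : Set.InjOn f (G.neighborFinset vmax) := by
        intro w hw w' hw' heq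
        rw [Finset.mem_coe, SimpleGraph.mem_neighborFinset] at hw hw'
        by_contra hne
        exact hf2 w w' hw hw' hne heq
      have hmaps : ∀ w ∈ G.neighborFinset vmax, f w ∈ 𝒟.filter (fun C => vmax ∈ C) := by
        intro w hw
        rw [SimpleGraph.mem_neighborFinset] at hw
        obtain ⟨h1, h2, _⟩ := hf1 w hw
        exact Finset.mem_filter.mpr ⟨h1, h2⟩
      calc G.maxDegree = G.degree vmax := hvmax
        _ = (G.neighborFinset vmax).card := rfl
        _ ≤ (𝒟.filter (fun C => vmax ∈ C)).card := Finset.card_le_card_of_injOn f hmaps hinj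
        _ ≤ k := hcnt vmax
    exact le_antisymm (Nat.sInf_le hmem) (le_csInf ⟨_, hmem⟩ hlb)
  · -- SepEqCover part
    -- get edge coloring from König
    obtain ⟨col⟩ := hbip
    obtain ⟨c, hc⟩ := koenig_edge_coloring col G.edgeFinset.card G le_rfl
      (fun x y h => col.valid h) G.maxDegree (fun w => G.degree_le_maxDegree w)
    -- turn it into a coloring of the pair cliques
    set cF : Finset V → ℕ := fun C =>
      if h : ∃ p : V × V, G.Adj p.1 p.2 ∧ C = {p.1, p.2} then
        c s(h.choose.1, h.choose.2) else 0 with hcF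
    have hcFval : ∀ x y : V, G.Adj x y → cF {x, y} = c s(x, y) := by
      intro x y hxy
      have h : ∃ p : V × V, G.Adj p.1 p.2 ∧ ({x, y} : Finset V) = {p.1, p.2} :=
        ⟨(x, y), hxy, rfl⟩
      simp only [hcF, dif_pos h]
      obtain ⟨hp1, hp2⟩ := h.choose_spec
      rcases pair_eq_cases hxy.ne hp2 with ⟨h1, h2⟩ | ⟨h1, h2⟩
      · rw [h1, h2]
      · rw [h1, h2, Sym2.eq_swap]
    have hmem : G.maxDegree ∈ {k : ℕ | ∃ 𝒞 : Finset (Finset V), SepEqCover G k 𝒞} := by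
      refine ⟨𝒞, hclique, hcover, ⟨cF, ?_, ?_⟩, hsep⟩
      · intro C hC
        obtain ⟨x, y, hxy, rfl⟩ := (hmem𝒞 C).mp hC
        rw [hcFval x y hxy]
        exact hc.1 x y hxy
      · intro C hC D hD hne hinter
        obtain ⟨t, ht⟩ := hinter
        rw [Finset.mem_inter] at ht
        obtain ⟨z, hz, rfl⟩ := hstruct C hC t ht.1
        obtain ⟨z', hz', rfl⟩ := hstruct D hD t ht.2
        have hzz' : z ≠ z' := by
          rintro rfl
          exact hne rfl
        rw [hcFval t z hz, hcFval t z' hz']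
        exact hc.2 t z z' hz hz' hzz'
    have hlb : ∀ k ∈ {k : ℕ | ∃ 𝒞 : Finset (Finset V), SepEqCover G k 𝒞},
        G.maxDegree ≤ k := by
      rintro k ⟨𝒟, hcl, hcov, ⟨cc, hcc1, hcc2⟩, -⟩
      obtain ⟨f, hf1, hf2⟩ := hlower 𝒟 hcl hcov
      have hmaps : ∀ w ∈ G.neighborFinset vmax, cc (f w) ∈ Finset.range k := by
        intro w hw
        rw [SimpleGraph.mem_neighborFinset] at hw
        exact Finset.mem_range.mpr (hcc1 _ (hf1 w hw).1)
      have hinj : Set.InjOn (fun w => cc (f w)) (G.neighborFinset vmax) := by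
        intro w hw w' hw' heq
        rw [Finset.mem_coe, SimpleGraph.mem_neighborFinset] at hw hw'
        by_contra hne
        have hfne : f w ≠ f w' := hf2 w w' hw hw' hne
        have hint : (f w ∩ f w').Nonempty :=
          ⟨vmax, Finset.mem_inter.mpr ⟨(hf1 w hw).2.1, (hf1 w' hw').2.1⟩⟩
        exact hcc2 (f w) (hf1 w hw).1 (f w') (hf1 w' hw').1 hfne hint heq
      calc G.maxDegree = G.degree vmax := hvmax
        _ = (G.neighborFinset vmax).card := rfl
        _ ≤ (Finset.range k).card := Finset.card_le_card_of_injOn _ hmaps hinj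
        _ = k := Finset.card_range k
    exact le_antisymm (Nat.sInf_le hmem) (le_csInf ⟨_, hmem⟩ hlb)
end

section
/- Let G be a finite simple graph in which every clique has at most 3 vertices and every vertex belongs to at most one triangle. Then the minimal k such that G has a clique k-cover satisfies k = max over vertices v of (deg(v) − tr(v)), where tr(v) ∈ {0,1} is the number of triangles containing v (assume G has at least one edge). -/
open SimpleGraph

private lemma clique_card_le_three {V : Type} [Fintype V] [DecidableEq V] {G : SimpleGraph V}
    (h4 : G.CliqueFree 4) {C : Finset V} (hC : G.IsClique (C : Set V)) : C.card ≤ 3 := by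
  by_contra h
  push_neg at h
  obtain ⟨t, hts, htc⟩ := C.exists_subset_card_eq (show 4 ≤ C.card by omega)
  exact h4 t ⟨hC.subset (by exact_mod_cast hts), htc⟩

private lemma lower_bound {V : Type} [Fintype V] [DecidableEq V] {G : SimpleGraph V}
    [DecidableRel G.Adj] (h4 : G.CliqueFree 4) {k : ℕ} {𝒞 : Finset (Finset V)}
    (hcl : ∀ C ∈ 𝒞, G.IsClique (C : Set V))
    (hcov : ∀ u v : V, G.Adj u v → ∃ C ∈ 𝒞, u ∈ C ∧ v ∈ C)
    (hcnt : ∀ v : V, (𝒞.filter (fun C => v ∈ C)).card ≤ k) (v : V) :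
    G.degree v - ((G.cliqueFinset 3).filter (fun C => v ∈ C)).card ≤ k := by
  classical
  set F := 𝒞.filter (fun C => v ∈ C) with hF
  set Tv := (G.cliqueFinset 3).filter (fun C => v ∈ C) with hTv
  have hsub : G.neighborFinset v ⊆ F.biUnion (fun C => C.erase v) := by
    intro u hu
    rw [mem_neighborFinset] at hu
    obtain ⟨C, hC, hvC, huC⟩ := hcov v u hu
    rw [Finset.mem_biUnion]
    exact ⟨C, by simp [hF, hC, hvC], by simp [huC, hu.ne']⟩
  have hdeg : G.degree v ≤ ∑ C ∈ F, (C.erase v).card := by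
    calc G.degree v = (G.neighborFinset v).card := rfl
    _ ≤ (F.biUnion (fun C => C.erase v)).card := Finset.card_le_card hsub
    _ ≤ _ := Finset.card_biUnion_le
  have hbound : ∀ C ∈ F, (C.erase v).card ≤ 1 + (if C ∈ Tv then 1 else 0) := by
    intro C hC
    simp only [hF, Finset.mem_filter] at hC
    have h3 := clique_card_le_three h4 (hcl C hC.1)
    have hce : (C.erase v).card = C.card - 1 := Finset.card_erase_of_mem hC.2
    by_cases h : C.card = 3
    · have : C ∈ Tv := by
        simp only [hTv, Finset.mem_filter, mem_cliqueFinset_iff]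
        exact ⟨⟨hcl C hC.1, h⟩, hC.2⟩
      simp [this, hce, h]
    · split <;> omega
  have hsum : ∑ C ∈ F, (C.erase v).card ≤ F.card + (F.filter (fun C => C ∈ Tv)).card := by
    calc ∑ C ∈ F, (C.erase v).card ≤ ∑ C ∈ F, (1 + if C ∈ Tv then 1 else 0) :=
      Finset.sum_le_sum hbound
    _ = F.card + (F.filter (fun C => C ∈ Tv)).card := by
        rw [Finset.sum_add_distrib, Finset.sum_const, smul_eq_mul, mul_one, Finset.sum_boole]
        simp
  have hTsub : (F.filter (fun C => C ∈ Tv)).card ≤ Tv.card :=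
    Finset.card_le_card (fun C hC => (Finset.mem_filter.1 hC).2)
  have hFk : F.card ≤ k := hcnt v
  omega

/-- If every clique of `G` has at most 3 vertices, every vertex lies in at most one
triangle, and `G` has an edge, then the minimal `k` with a clique `k`-cover equals
`max_v (deg(v) - tr(v))`, where `tr(v)` is the number of triangles containing `v`. -/
theorem stmt_10 {V : Type} [Fintype V] [DecidableEq V] (G : SimpleGraph V)
    [DecidableRel G.Adj] (h4 : G.CliqueFree 4)
    (htr : ∀ v : V, ((G.cliqueFinset 3).filter (fun C => v ∈ C)).card ≤ 1)
    (he : G.edgeSet.Nonempty) :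
    sInf {k : ℕ | ∃ 𝒞 : Finset (Finset V), CliqueKCover G k 𝒞} =
      Finset.univ.sup
        (fun v : V => G.degree v - ((G.cliqueFinset 3).filter (fun C => v ∈ C)).card) := by
  classical
  set M := Finset.univ.sup
      (fun v : V => G.degree v - ((G.cliqueFinset 3).filter (fun C => v ∈ C)).card) with hM
  -- the construction
  set E2 : Finset (Finset V) :=
    (G.cliqueFinset 2).filter (fun e => ∀ T ∈ G.cliqueFinset 3, ¬ e ⊆ T) with hE2
  set 𝒞₀ : Finset (Finset V) := G.cliqueFinset 3 ∪ E2 with h𝒞₀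
  have hcover : CliqueKCover G M 𝒞₀ := by
    refine ⟨?_, ?_, ?_⟩
    · intro C hC
      rcases Finset.mem_union.1 hC with h | h
      · exact (mem_cliqueFinset_iff.1 h).1
      · exact (mem_cliqueFinset_iff.1 (Finset.mem_filter.1 h).1).1
    · intro u v huv
      have hpair : G.IsNClique 2 ({u, v} : Finset V) := by
        refine (isNClique_one.2 ⟨v, rfl⟩).insert ?_
        intro b hb
        rw [Finset.mem_singleton] at hb
        subst hb
        exact huv
      by_cases h : ∃ T ∈ G.cliqueFinset 3, ({u, v} : Finset V) ⊆ T
      · obtain ⟨T, hT, hsub⟩ := h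
        exact ⟨T, Finset.mem_union_left _ hT,
          hsub (by simp), hsub (by simp)⟩
      · push_neg at h
        refine ⟨{u, v}, Finset.mem_union_right _ ?_, by simp, by simp⟩
        rw [hE2, Finset.mem_filter, mem_cliqueFinset_iff]
        exact ⟨hpair, h⟩
    · intro v
      set Tv := (G.cliqueFinset 3).filter (fun C => v ∈ C) with hTv
      set Ev := E2.filter (fun C => v ∈ C) with hEv
      set B : Finset V := Tv.biUnion (fun T => T.erase v) with hB
      have hBsub : B ⊆ G.neighborFinset v := by
        intro u hu
        rw [hB, Finset.mem_biUnion] at hu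
        obtain ⟨T, hT, huT⟩ := hu
        rw [hTv, Finset.mem_filter, mem_cliqueFinset_iff] at hT
        rw [Finset.mem_erase] at huT
        rw [mem_neighborFinset]
        exact hT.1.1 hT.2 huT.2 (Ne.symm huT.1)
      have htv : Tv.card ≤ 1 := htr v
      have hBcard : B.card = 2 * Tv.card := by
        rcases Nat.le_one_iff_eq_zero_or_eq_one.1 htv with h0 | h1
        · rw [hB, Finset.card_eq_zero.1 h0]
          simp
        · obtain ⟨T, hT⟩ := Finset.card_eq_one.1 h1
          have hTmem : T ∈ Tv := hT ▸ Finset.mem_singleton_self T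
          rw [hTv, Finset.mem_filter, mem_cliqueFinset_iff] at hTmem
          rw [hB, hT, Finset.singleton_biUnion, Finset.card_erase_of_mem hTmem.2,
            hTmem.1.2]
          simp
      have hEsub : Ev ⊆ ((G.neighborFinset v) \ B).image (fun u => ({v, u} : Finset V)) := by
        intro e (hev : e ∈ Ev)
        rw [hEv, Finset.mem_filter] at hev
        obtain ⟨heE, hve⟩ := hev
        rw [hE2, Finset.mem_filter, mem_cliqueFinset_iff] at heE
        obtain ⟨⟨hcl, hcard⟩, hnotri⟩ := heE
        obtain ⟨a, b, hab, heab⟩ := Finset.card_eq_two.1 hcard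
        have hvab : v = a ∨ v = b := by
          rw [heab] at hve; simpa using hve
        obtain ⟨u, hune, heq⟩ : ∃ u, u ≠ v ∧ e = {v, u} := by
          rcases hvab with rfl | rfl
          · exact ⟨b, fun h => hab h.symm, heab⟩
          · exact ⟨a, hab, by rw [heab, Finset.pair_comm]⟩
        have huadj : G.Adj v u := by
          apply hcl (by simp [heq]) (by simp [heq]) (Ne.symm hune)
        have huB : u ∉ B := by
          intro huB
          rw [hB, Finset.mem_biUnion] at huB
          obtain ⟨T, hT, huT⟩ := huB
          rw [hTv, Finset.mem_filter] at hT
          refine hnotri T hT.1 ?_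
          rw [heq]
          intro x hx
          rcases Finset.mem_insert.1 hx with rfl | hx
          · exact hT.2
          · rw [Finset.mem_singleton] at hx
            subst hx
            exact Finset.mem_of_mem_erase huT
        rw [Finset.mem_image]
        exact ⟨u, Finset.mem_sdiff.2 ⟨(mem_neighborFinset G v u).2 huadj, huB⟩, heq.symm⟩
      have hEcard : Ev.card ≤ G.degree v - 2 * Tv.card := by
        calc Ev.card ≤ (((G.neighborFinset v) \ B).image (fun u => ({v, u} : Finset V))).card :=
          Finset.card_le_card hEsub
        _ ≤ ((G.neighborFinset v) \ B).card := Finset.card_image_le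
        _ = G.degree v - 2 * Tv.card := by
            rw [Finset.card_sdiff_of_subset hBsub, hBcard]; rfl
      have hBle : 2 * Tv.card ≤ G.degree v := by
        rw [← hBcard]
        exact Finset.card_le_card hBsub
      have hsplit : (𝒞₀.filter (fun C => v ∈ C)).card ≤ Tv.card + Ev.card := by
        rw [h𝒞₀, Finset.filter_union]
        exact Finset.card_union_le _ _
      have hMge : G.degree v - Tv.card ≤ M := by
        rw [hTv, hM]
        exact Finset.le_sup
          (f := fun v : V => G.degree v - ((G.cliqueFinset 3).filter (fun C => v ∈ C)).card)
          (Finset.mem_univ v)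
      omega
  refine le_antisymm (Nat.sInf_le ⟨𝒞₀, hcover⟩) (le_csInf ⟨M, 𝒞₀, hcover⟩ ?_)
  rintro k ⟨𝒞, hcl, hcov, hcnt⟩
  exact Finset.sup_le fun v _ => lower_bound h4 hcl hcov hcnt v
end

section
/- A connected subcubic graph G on at least 5 vertices has rank dimension at most 2 (i.e., is the line graph of a multigraph) if and only if G is claw-free. -/
open SimpleGraph

/-- A maximal clique (as a Finset). -/
def MaxCl {V : Type} [Fintype V] [DecidableEq V] (G : SimpleGraph V) (C : Finset V) : Prop :=
  G.IsClique (C : Set V) ∧ ∀ w ∉ C, ¬ G.IsClique ((insert w C : Finset V) : Set V)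

lemma exists_maxcl {V : Type} [Fintype V] [DecidableEq V] (G : SimpleGraph V)
    (C : Finset V) (hC : G.IsClique (C : Set V)) :
    ∃ D : Finset V, C ⊆ D ∧ MaxCl G D := by
  classical
  obtain ⟨D, hD, hmax⟩ := Finset.exists_max_image
    (Finset.univ.filter fun D => C ⊆ D ∧ G.IsClique (D : Set V)) Finset.card
    ⟨C, by simp [hC]⟩
  simp only [Finset.mem_filter, Finset.mem_univ, true_and] at hD
  refine ⟨D, hD.1, hD.2, ?_⟩
  intro w hw hcl
  have hle := hmax (insert w D) (by
    simp only [Finset.mem_filter, Finset.mem_univ, true_and]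
    exact ⟨hD.1.trans (Finset.subset_insert _ _), hcl⟩)
  rw [Finset.card_insert_of_notMem hw] at hle
  omega

lemma maxcl_eq_of_subset {V : Type} [Fintype V] [DecidableEq V] (G : SimpleGraph V)
    {C D : Finset V} (hC : MaxCl G C) (hD : G.IsClique (D : Set V)) (h : C ⊆ D) : C = D := by
  by_contra hne
  obtain ⟨w, hwD, hwC⟩ := Finset.exists_of_ssubset (h.ssubset_of_ne hne)
  refine hC.2 w hwC (hD.subset ?_)
  intro x hx
  simp only [Finset.coe_insert, Set.mem_insert_iff, Finset.mem_coe] at hx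
  rcases hx with rfl | hx
  · exact hwD
  · exact h hx

lemma clique3 {V : Type} (G : SimpleGraph V) {a b c : V}
    (hab : G.Adj a b) (hac : G.Adj a c) (hbc : G.Adj b c) :
    G.IsClique ({a, b, c} : Set V) := by
  intro x hx y hy hxy
  simp only [Set.mem_insert_iff, Set.mem_singleton_iff] at hx hy
  rcases hx with rfl | rfl | rfl <;> rcases hy with rfl | rfl | rfl <;>
    first
      | exact absurd rfl hxy
      | assumption
      | exact hab.symm
      | exact hac.symm
      | exact hbc.symm

/-- Pure combinatorics for the mixed-size case. -/
lemma mixed_case {V : Type} [DecidableEq V] (N A B C : Finset V) (hN : N.card ≤ 3)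
    (hA : A ⊆ N) (hB : B ⊆ N) (hC : C ⊆ N)
    (hAB : ¬ A ⊆ B) (hAC : ¬ A ⊆ C) (hCB : ¬ C ⊆ B)
    (hA1 : A.card = 1) (hB2 : B.card = 2) : False := by
  obtain ⟨a, rfl⟩ := Finset.card_eq_one.mp hA1
  have haB : a ∉ B := fun h => hAB (Finset.singleton_subset_iff.mpr h)
  have haC : a ∉ C := fun h => hAC (Finset.singleton_subset_iff.mpr h)
  have hsub : insert a B ⊆ N :=
    Finset.insert_subset (hA (Finset.mem_singleton_self a)) hB
  have hc3 : (insert a B).card = 3 := by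
    rw [Finset.card_insert_of_notMem haB, hB2]
  have hNe : N = insert a B :=
    (Finset.eq_of_subset_of_card_le hsub (by rw [hc3]; exact hN)).symm
  apply hCB
  intro x hx
  have hxN : x ∈ N := hC hx
  rw [hNe, Finset.mem_insert] at hxN
  rcases hxN with rfl | h
  · exact absurd hx haC
  · exact h

lemma key_lemma {V : Type} [Fintype V] [DecidableEq V] (G : SimpleGraph V) [DecidableRel G.Adj]
    (hsub : ∀ v : V, G.degree v ≤ 3)
    (hcf : ∀ a b c d : V, G.Adj a b → G.Adj a c → G.Adj a d →
        b ≠ c → b ≠ d → c ≠ d → (G.Adj b c ∨ G.Adj b d ∨ G.Adj c d))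
    (v : V) (C₁ C₂ C₃ : Finset V)
    (h1 : MaxCl G C₁) (h2 : MaxCl G C₂) (h3 : MaxCl G C₃)
    (hv1 : v ∈ C₁) (hv2 : v ∈ C₂) (hv3 : v ∈ C₃)
    (h12 : C₁ ≠ C₂) (h13 : C₁ ≠ C₃) (h23 : C₂ ≠ C₃) : False := by
  classical
  set N := G.neighborFinset v with hNdef
  have hNcard : N.card ≤ 3 := by
    rw [hNdef, G.card_neighborFinset_eq_degree]; exact hsub v
  have memN : ∀ {x : V}, x ∈ N → G.Adj v x := fun hx => (G.mem_neighborFinset _ _).mp hx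
  have nev : ∀ {x : V}, x ∈ N → x ≠ v := fun hx => (memN hx).ne'
  have hsubN : ∀ (C : Finset V), MaxCl G C → v ∈ C → C.erase v ⊆ N := by
    intro C hC hv x hx
    rw [Finset.mem_erase] at hx
    exact (G.mem_neighborFinset _ _).mpr
      (hC.1 (Finset.mem_coe.mpr hv) (Finset.mem_coe.mpr hx.2) (Ne.symm hx.1))
  have hins : ∀ (C : Finset V), v ∈ C → C = insert v (C.erase v) :=
    fun C hv => (Finset.insert_erase hv).symm
  have hincomp : ∀ (C D : Finset V), MaxCl G C → MaxCl G D → v ∈ C → v ∈ D → C ≠ D →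
      ¬ C.erase v ⊆ D.erase v := by
    intro C D hC hD hvC hvD hne hss
    apply hne
    apply maxcl_eq_of_subset G hC hD.1
    intro x hx
    by_cases hxv : x = v
    · exact hxv ▸ hvD
    · exact Finset.erase_subset v D (hss (Finset.mem_erase.mpr ⟨hxv, hx⟩))
  set A := C₁.erase v with hAdef
  set B := C₂.erase v with hBdef
  set C := C₃.erase v with hCdef
  have hAN : A ⊆ N := hsubN C₁ h1 hv1
  have hBN : B ⊆ N := hsubN C₂ h2 hv2
  have hCN : C ⊆ N := hsubN C₃ h3 hv3
  have hAB : ¬ A ⊆ B := hincomp C₁ C₂ h1 h2 hv1 hv2 h12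
  have hBA : ¬ B ⊆ A := hincomp C₂ C₁ h2 h1 hv2 hv1 h12.symm
  have hAC : ¬ A ⊆ C := hincomp C₁ C₃ h1 h3 hv1 hv3 h13
  have hCA : ¬ C ⊆ A := hincomp C₃ C₁ h3 h1 hv3 hv1 h13.symm
  have hBC : ¬ B ⊆ C := hincomp C₂ C₃ h2 h3 hv2 hv3 h23
  have hCB : ¬ C ⊆ B := hincomp C₃ C₂ h3 h2 hv3 hv2 h23.symm
  have hcards : ∀ (X Y : Finset V), X ⊆ N → Y ⊆ N → ¬ X ⊆ Y → ¬ Y ⊆ X →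
      X.card = 1 ∨ X.card = 2 := by
    intro X Y hX hY hXY hYX
    have h1' : 1 ≤ X.card := by
      rcases Finset.eq_empty_or_nonempty X with rfl | h
      · exact absurd (Finset.empty_subset Y) hXY
      · exact Finset.card_pos.mpr h
    have h2' : X.card ≤ 2 := by
      by_contra hgt
      push_neg at hgt
      have hXN : X = N := Finset.eq_of_subset_of_card_le hX (by omega)
      exact hYX (by rw [hXN]; exact hY)
    omega
  have hA12 := hcards A B hAN hBN hAB hBA
  have hB12 := hcards B A hBN hAN hBA hAB
  have hC12 := hcards C A hCN hAN hCA hAC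
  -- helper: maximal clique with erase = singleton gives nonadjacency
  have nonadj : ∀ (X : Finset V), MaxCl G X → v ∈ X → ∀ x y : V,
      X.erase v = {y} → x ∈ N → x ≠ y → ¬ G.Adj x y := by
    intro X hX hvX x y hXy hxN hxy hadj
    have hxv : x ≠ v := nev hxN
    have hyN : y ∈ N := by
      have h' := hsubN X hX hvX
      rw [hXy] at h'
      exact h' (Finset.mem_singleton_self y)
    apply hX.2 x (by rw [hins X hvX, hXy]; simp [hxv, hxy])
    have hcoe : ((insert x X : Finset V) : Set V) = {x, v, y} := by
      rw [hins X hvX, hXy]; simp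
    rw [hcoe]
    exact clique3 G (memN hxN).symm hadj (memN hyN)
  rcases hA12 with hA1 | hA2 <;> rcases hB12 with hB1 | hB2 <;> rcases hC12 with hC1 | hC2
  -- (1,1,1) : all singletons : claw
  · obtain ⟨b, hb⟩ := Finset.card_eq_one.mp hA1
    obtain ⟨c, hc⟩ := Finset.card_eq_one.mp hB1
    obtain ⟨d, hd⟩ := Finset.card_eq_one.mp hC1
    have hbN : b ∈ N := hAN (hb ▸ Finset.mem_singleton_self b)
    have hcN : c ∈ N := hBN (hc ▸ Finset.mem_singleton_self c)
    have hdN : d ∈ N := hCN (hd ▸ Finset.mem_singleton_self d)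
    have hbc : b ≠ c := fun h => hAB (by rw [hb, hc, h])
    have hbd : b ≠ d := fun h => hAC (by rw [hb, hd, h])
    have hcd : c ≠ d := fun h => hBC (by rw [hc, hd, h])
    have n1 : ¬ G.Adj b c := nonadj C₂ h2 hv2 b c hc hbN hbc
    have n2 : ¬ G.Adj b d := nonadj C₃ h3 hv3 b d hd hbN hbd
    have n3 : ¬ G.Adj c d := nonadj C₃ h3 hv3 c d hd hcN hcd
    rcases hcf v b c d (memN hbN) (memN hcN) (memN hdN) hbc hbd hcd with h | h | h
    · exact n1 h
    · exact n2 h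
    · exact n3 h
  -- mixed cases
  · exact mixed_case N A C B hNcard hAN hCN hBN hAC hAB hBC hA1 hC2
  · exact mixed_case N A B C hNcard hAN hBN hCN hAB hAC hCB hA1 hB2
  · exact mixed_case N A B C hNcard hAN hBN hCN hAB hAC hCB hA1 hB2
  · exact mixed_case N B A C hNcard hBN hAN hCN hBA hBC hCA hB1 hA2
  · exact mixed_case N B A C hNcard hBN hAN hCN hBA hBC hCA hB1 hA2
  · exact mixed_case N C A B hNcard hCN hAN hBN hCA hCB hBA hC1 hA2
  -- (2,2,2) : all pairs
  · have hABne : A ≠ B := fun h => hAB (by rw [h])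
    have hACne : A ≠ C := fun h => hAC (by rw [h])
    have hBCne : B ≠ C := fun h => hBC (by rw [h])
    have hN3 : N.card = 3 := by
      have hU : A ∪ B ⊆ N := Finset.union_subset hAN hBN
      have hI : (A ∩ B).card ≤ 1 := by
        by_contra hI
        push_neg at hI
        have hIA : A ∩ B = A :=
          Finset.eq_of_subset_of_card_le Finset.inter_subset_left (by omega)
        exact hAB (by rw [← hIA]; exact Finset.inter_subset_right)
      have hcui := Finset.card_union_add_card_inter A B
      have hle := Finset.card_le_card hU
      omega
    have hclA : G.IsClique (A : Set V) :=
      h1.1.subset (Finset.coe_subset.mpr (Finset.erase_subset _ _))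
    have hclB : G.IsClique (B : Set V) :=
      h2.1.subset (Finset.coe_subset.mpr (Finset.erase_subset _ _))
    have hclC : G.IsClique (C : Set V) :=
      h3.1.subset (Finset.coe_subset.mpr (Finset.erase_subset _ _))
    have hP : ({A, B, C} : Finset (Finset V)) = N.powersetCard 2 := by
      apply Finset.eq_of_subset_of_card_le
      · intro X hX
        simp only [Finset.mem_insert, Finset.mem_singleton] at hX
        rcases hX with rfl | rfl | rfl
        · exact Finset.mem_powersetCard.mpr ⟨hAN, hA2⟩
        · exact Finset.mem_powersetCard.mpr ⟨hBN, hB2⟩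
        · exact Finset.mem_powersetCard.mpr ⟨hCN, hC2⟩
      · rw [Finset.card_powersetCard, hN3]
        have hcard3 : ({A, B, C} : Finset (Finset V)).card = 3 := by
          rw [Finset.card_insert_of_notMem (by simp [hABne, hACne]),
              Finset.card_insert_of_notMem (by simp [hBCne]), Finset.card_singleton]
        rw [hcard3]
        decide
    have pair_adj : ∀ x ∈ N, ∀ y ∈ N, x ≠ y → G.Adj x y := by
      intro x hx y hy hxy
      have hp : ({x, y} : Finset V) ∈ N.powersetCard 2 :=
        Finset.mem_powersetCard.mpr
          ⟨Finset.insert_subset hx (Finset.singleton_subset_iff.mpr hy),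
            Finset.card_pair hxy⟩
      rw [← hP] at hp
      simp only [Finset.mem_insert, Finset.mem_singleton] at hp
      have key : ∀ (X : Finset V), G.IsClique (X : Set V) → ({x, y} : Finset V) = X →
          G.Adj x y := by
        intro X hX hXe
        exact hX (by rw [← hXe]; simp) (by rw [← hXe]; simp) hxy
      rcases hp with h | h | h
      · exact key A hclA h
      · exact key B hclB h
      · exact key C hclC h
    have hbig : G.IsClique ((insert v N : Finset V) : Set V) := by
      intro x hx y hy hxy
      simp only [Finset.coe_insert, Set.mem_insert_iff, Finset.mem_coe] at hx hy
      rcases hx with rfl | hx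
      · rcases hy with rfl | hy
        · exact absurd rfl hxy
        · exact memN hy
      · rcases hy with rfl | hy
        · exact (memN hx).symm
        · exact pair_adj x hx y hy hxy
    have hmne : (N \ A).Nonempty := by
      rw [← Finset.card_pos, Finset.card_sdiff_of_subset hAN, hN3, hA2]
      norm_num
    obtain ⟨m, hm⟩ := hmne
    rw [Finset.mem_sdiff] at hm
    apply h1.2 m (by
      rw [hins C₁ hv1]
      simp [Finset.mem_insert, nev hm.1, hm.2]
      exact fun h => hm.2 (Finset.mem_erase.mpr ⟨nev hm.1, h⟩))
    refine hbig.subset ?_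
    intro x hx
    simp only [Finset.coe_insert, Set.mem_insert_iff, Finset.mem_coe] at hx ⊢
    rcases hx with rfl | hx
    · right; exact hm.1
    · rw [hins C₁ hv1, Finset.mem_insert] at hx
      rcases hx with rfl | hx
      · left; rfl
      · right; exact hAN hx

/-- A connected subcubic graph on at least 5 vertices has rank dimension at most 2
(i.e. admits a clique 2-cover, equivalently is a line graph of a multigraph)
iff it is claw-free. -/
theorem stmt_12 {V : Type} [Fintype V] [DecidableEq V] (G : SimpleGraph V)
    [DecidableRel G.Adj] (hconn : G.Connected) (hcard : 5 ≤ Fintype.card V)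
    (hsub : ∀ v : V, G.degree v ≤ 3) :
    (∃ 𝒞 : Finset (Finset V), CliqueKCover G 2 𝒞) ↔
      ∀ a b c d : V, G.Adj a b → G.Adj a c → G.Adj a d →
        b ≠ c → b ≠ d → c ≠ d → (G.Adj b c ∨ G.Adj b d ∨ G.Adj c d) := by
  classical
  constructor
  · rintro ⟨𝒞, hcl, hcov, hcount⟩ a b c d hab hac had hbc hbd hcd
    by_contra hcon
    push_neg at hcon
    obtain ⟨n1, n2, n3⟩ := hcon
    obtain ⟨Cb, hCb, haCb, hbCb⟩ := hcov a b hab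
    obtain ⟨Cc, hCc, haCc, hcCc⟩ := hcov a c hac
    obtain ⟨Cd, hCd, haCd, hdCd⟩ := hcov a d had
    have hne1 : Cb ≠ Cc := by
      rintro rfl
      exact n1 (hcl Cb hCb (Finset.mem_coe.mpr hbCb) (Finset.mem_coe.mpr hcCc) hbc)
    have hne2 : Cb ≠ Cd := by
      rintro rfl
      exact n2 (hcl Cb hCb (Finset.mem_coe.mpr hbCb) (Finset.mem_coe.mpr hdCd) hbd)
    have hne3 : Cc ≠ Cd := by
      rintro rfl
      exact n3 (hcl Cc hCc (Finset.mem_coe.mpr hcCc) (Finset.mem_coe.mpr hdCd) hcd)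
    have hlt : 2 < (𝒞.filter fun C => a ∈ C).card := by
      rw [Finset.two_lt_card_iff]
      exact ⟨Cb, Cc, Cd, Finset.mem_filter.mpr ⟨hCb, haCb⟩,
        Finset.mem_filter.mpr ⟨hCc, haCc⟩, Finset.mem_filter.mpr ⟨hCd, haCd⟩,
        hne1, hne2, hne3⟩
    have := hcount a
    omega
  · intro hcf
    refine ⟨Finset.univ.filter (fun C => MaxCl G C), ?_, ?_, ?_⟩
    · intro C hC
      exact ((Finset.mem_filter.mp hC).2).1
    · intro u w huw
      obtain ⟨D, hDsub, hD⟩ := exists_maxcl G {u, w} (by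
        rw [Finset.coe_pair]
        exact SimpleGraph.isClique_pair.mpr (fun _ => huw))
      exact ⟨D, Finset.mem_filter.mpr ⟨Finset.mem_univ _, hD⟩,
        hDsub (by simp), hDsub (by simp)⟩
    · intro v
      by_contra hgt
      push_neg at hgt
      obtain ⟨C₁, C₂, C₃, m1, m2, m3, d12, d13, d23⟩ := Finset.two_lt_card_iff.mp hgt
      rw [Finset.mem_filter, Finset.mem_filter] at m1 m2 m3
      exact key_lemma G hsub hcf v C₁ C₂ C₃ m1.1.2 m2.1.2 m3.1.2 m1.2 m2.2 m3.2 d12 d13 d23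
end

section
/- For every n ≥ 2, the Sierpinski gasket graph S_n admits a clique 2-cover, and moreover a separating equivalent 3-cover in which every non-contact vertex is covered by exactly two cliques, every contact vertex by exactly one clique, and cliques containing distinct contact vertices receive distinct colors. -/
open SimpleGraph

/-- A graph together with three designated contact vertices. -/
structure Tetrad where
  V : Type
  G : SimpleGraph V
  x1 : V
  x2 : V
  x3 : V

/-- The gluing relation identifying contact vertices of three disjoint copies of `T`
in a cyclic fashion. -/
def glueRel (T : Tetrad) (a b : Fin 3 × T.V) : Prop :=
  (a = (0, T.x2) ∧ b = (1, T.x1)) ∨ (a = (1, T.x3) ∧ b = (2, T.x2)) ∨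
    (a = (2, T.x1) ∧ b = (0, T.x3))

/-- Glue three disjoint copies of `T` along contact vertices; the three unidentified
contact vertices become the contact vertices of the result. -/
def glue (T : Tetrad) : Tetrad where
  V := Quot (glueRel T)
  G :=
    { Adj := fun u v => u ≠ v ∧ ∃ (i : Fin 3) (a b : T.V),
        u = Quot.mk _ (i, a) ∧ v = Quot.mk _ (i, b) ∧ T.G.Adj a b
      symm := ⟨by
        rintro u v ⟨hne, i, a, b, hu, hv, hab⟩
        exact ⟨hne.symm, i, b, a, hv, hu, hab.symm⟩⟩
      loopless := ⟨fun u h => h.1 rfl⟩ }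
  x1 := Quot.mk _ (0, T.x1)
  x2 := Quot.mk _ (1, T.x2)
  x3 := Quot.mk _ (2, T.x3)

/-- The Sierpinski gasket graphs: `SG 1 = K₃`, and `SG (n+1)` is the gluing of three
copies of `SG n`. (`SG n` is the graph `S_n` for `n ≥ 1`.) -/
def SG : ℕ → Tetrad
  | 0 => ⟨Fin 3, ⊤, 0, 1, 2⟩
  | 1 => ⟨Fin 3, ⊤, 0, 1, 2⟩
  | n + 2 => glue (SG (n + 1))

/-- A clique `k`-cover, with set-valued clusters. -/
def CliqueKCoverS {V : Type} (G : SimpleGraph V) (k : ℕ) (𝒞 : Set (Set V)) : Prop :=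
  (∀ C ∈ 𝒞, G.IsClique C) ∧
  (∀ u v : V, G.Adj u v → ∃ C ∈ 𝒞, u ∈ C ∧ v ∈ C) ∧
  (∀ v : V, {C ∈ 𝒞 | v ∈ C}.Finite ∧ {C ∈ 𝒞 | v ∈ C}.ncard ≤ k)

/-- A separating equivalent `k`-cover with an explicit coloring `c` of the clusters. -/
def SepEqCoverWith {V : Type} (G : SimpleGraph V) (k : ℕ) (𝒞 : Set (Set V))
    (c : Set V → ℕ) : Prop :=
  (∀ C ∈ 𝒞, G.IsClique C) ∧
  (∀ u v : V, G.Adj u v → ∃ C ∈ 𝒞, u ∈ C ∧ v ∈ C) ∧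
  (∀ C ∈ 𝒞, c C < k) ∧
  (∀ C ∈ 𝒞, ∀ D ∈ 𝒞, C ≠ D → (C ∩ D).Nonempty → c C ≠ c D) ∧
  (∀ u v : V, u ≠ v → ∃ C ∈ 𝒞, (u ∈ C ∧ v ∉ C) ∨ (v ∈ C ∧ u ∉ C))

namespace SGaux
def Distinct (T : Tetrad) : Prop := T.x1 ≠ T.x2 ∧ T.x1 ≠ T.x3 ∧ T.x2 ≠ T.x3
variable {T : Tetrad}
lemma rel_trans_false (hD : Distinct T) {a b c : Fin 3 × T.V}
    (h1 : glueRel T a b) (h2 : glueRel T b c) : False := by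
  obtain ⟨d12, d13, d23⟩ := hD
  rcases h1 with ⟨_, h1⟩ | ⟨_, h1⟩ | ⟨_, h1⟩ <;>
    rcases h2 with ⟨h2, _⟩ | ⟨h2, _⟩ | ⟨h2, _⟩ <;> simp_all [Prod.ext_iff]
lemma rel_right_unique (hD : Distinct T) {a b c : Fin 3 × T.V}
    (h1 : glueRel T a b) (h2 : glueRel T a c) : b = c := by
  obtain ⟨d12, d13, d23⟩ := hD
  rcases h1 with ⟨h1, rfl⟩ | ⟨h1, rfl⟩ | ⟨h1, rfl⟩ <;>
    rcases h2 with ⟨h2, rfl⟩ | ⟨h2, rfl⟩ | ⟨h2, rfl⟩ <;> simp_all [Prod.ext_iff]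
lemma rel_left_unique (hD : Distinct T) {a b c : Fin 3 × T.V}
    (h1 : glueRel T a c) (h2 : glueRel T b c) : a = b := by
  obtain ⟨d12, d13, d23⟩ := hD
  rcases h1 with ⟨rfl, h1⟩ | ⟨rfl, h1⟩ | ⟨rfl, h1⟩ <;>
    rcases h2 with ⟨rfl, h2⟩ | ⟨rfl, h2⟩ | ⟨rfl, h2⟩ <;> simp_all [Prod.ext_iff]
lemma mk_eq_iff (hD : Distinct T) {a b : Fin 3 × T.V} :
    Quot.mk (glueRel T) a = Quot.mk (glueRel T) b ↔
      a = b ∨ glueRel T a b ∨ glueRel T b a := by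
  rw [Quot.eq]
  constructor
  · intro h
    induction h with
    | rel x y h => exact Or.inr (Or.inl h)
    | refl => exact Or.inl rfl
    | symm x y h ih => tauto
    | trans x y z h1 h2 ih1 ih2 =>
        rcases ih1 with rfl | h1 | h1
        · exact ih2
        · rcases ih2 with rfl | h2 | h2
          · exact Or.inr (Or.inl h1)
          · exact absurd (rel_trans_false hD h1 h2) (by simp)
          · exact Or.inl (rel_left_unique hD h1 h2)
        · rcases ih2 with rfl | h2 | h2
          · exact Or.inr (Or.inr h1)
          · exact Or.inl (rel_right_unique hD h1 h2)
          · exact absurd (rel_trans_false hD h2 h1) (by simp)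
  · rintro (rfl | h | h)
    · exact Relation.EqvGen.refl _
    · exact Relation.EqvGen.rel _ _ h
    · exact Relation.EqvGen.symm _ _ (Relation.EqvGen.rel _ _ h)

lemma mk_copy_inj (hD : Distinct T) {i : Fin 3} {a b : T.V}
    (h : Quot.mk (glueRel T) (i, a) = Quot.mk (glueRel T) (i, b)) : a = b := by
  rcases (mk_eq_iff hD).1 h with h | h | h
  · exact congrArg Prod.snd h
  · rcases h with ⟨h1, h2⟩ | ⟨h1, h2⟩ | ⟨h1, h2⟩ <;> simp_all [Prod.ext_iff]
  · rcases h with ⟨h1, h2⟩ | ⟨h1, h2⟩ | ⟨h1, h2⟩ <;> simp_all [Prod.ext_iff]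

/-- the (at most two) glued points of copy `i` -/
def gpts (T : Tetrad) : Fin 3 → Set T.V :=
  ![{T.x2, T.x3}, {T.x1, T.x3}, {T.x1, T.x2}]

lemma mem_gpts_of_rel {i : Fin 3} {a : T.V} {p : Fin 3 × T.V}
    (h : glueRel T (i, a) p ∨ glueRel T p (i, a)) : a ∈ gpts T i := by
  rcases h with (⟨h, _⟩ | ⟨h, _⟩ | ⟨h, _⟩) | (⟨_, h⟩ | ⟨_, h⟩ | ⟨_, h⟩) <;>
    · obtain ⟨rfl, rfl⟩ := Prod.mk.injEq .. ▸ h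
      simp [gpts]

def push (T : Tetrad) (i : Fin 3) (C : Set T.V) : Set (glue T).V :=
  {v | ∃ a ∈ C, v = Quot.mk (glueRel T) (i, a)}

lemma mem_push {i : Fin 3} {C : Set T.V} {v : (glue T).V} :
    v ∈ push T i C ↔ ∃ a ∈ C, v = Quot.mk (glueRel T) (i, a) := Iff.rfl

lemma push_inj_same (hD : Distinct T) {i : Fin 3} {C D : Set T.V}
    (h : push T i C = push T i D) : C = D := by
  ext a
  constructor
  · intro ha
    have : Quot.mk (glueRel T) (i, a) ∈ push T i D := h ▸ ⟨a, ha, rfl⟩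
    obtain ⟨b, hb, hq⟩ := this
    exact (mk_copy_inj hD hq) ▸ hb
  · intro ha
    have : Quot.mk (glueRel T) (i, a) ∈ push T i C := h.symm ▸ ⟨a, ha, rfl⟩
    obtain ⟨b, hb, hq⟩ := this
    exact (mk_copy_inj hD hq) ▸ hb

lemma push_ncard (hD : Distinct T) (i : Fin 3) (C : Set T.V) :
    (push T i C).ncard = C.ncard := by
  have : push T i C = (fun a => Quot.mk (glueRel T) (i, a)) '' C := by
    ext v; simp [mem_push, Set.mem_image, eq_comm]
    exact ⟨fun ⟨a, ha, h⟩ => ⟨a, ha, h.symm⟩, fun ⟨a, ha, h⟩ => ⟨a, ha, h.symm⟩⟩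
  rw [this]
  exact Set.ncard_image_of_injOn fun a _ b _ h => mk_copy_inj hD h

lemma push_inj (hD : Distinct T) {i j : Fin 3} {C D : Set T.V}
    (hC : 3 ≤ C.ncard) (h : push T i C = push T j D) : i = j ∧ C = D := by
  rcases eq_or_ne i j with rfl | hij
  · exact ⟨rfl, push_inj_same hD h⟩
  · exfalso
    have hfin : (gpts T i).Finite := by
      have : gpts T i ⊆ {T.x1, T.x2, T.x3} := by
        fin_cases i <;> simp [gpts] <;> intro x hx <;> rcases hx with rfl | rfl <;> simp
      exact (((Set.finite_singleton _).insert _).insert _).subset this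
    have hne : ¬ C ⊆ gpts T i := by
      intro hsub
      have h2 : (gpts T i).ncard ≤ 2 := by
        fin_cases i <;>
          · simp only [gpts]
            refine le_trans (Set.ncard_insert_le _ _) ?_
            simp
      have := Set.ncard_le_ncard hsub hfin
      omega
    obtain ⟨a, haC, hag⟩ := Set.not_subset.1 hne
    have : Quot.mk (glueRel T) (i, a) ∈ push T j D := h ▸ ⟨a, haC, rfl⟩
    obtain ⟨b, hbD, hq⟩ := this
    rcases (mk_eq_iff hD).1 hq with heq | hrel | hrel
    · exact hij (congrArg Prod.fst heq)
    · exact hag (mem_gpts_of_rel (Or.inl hrel))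
    · exact hag (mem_gpts_of_rel (Or.inr hrel))

structure Good (T : Tetrad) (𝒞 : Set (Set T.V)) (c : Set T.V → ℕ) : Prop where
  distinct : Distinct T
  clique : ∀ C ∈ 𝒞, T.G.IsClique C
  cover : ∀ u v, T.G.Adj u v → ∃ C ∈ 𝒞, u ∈ C ∧ v ∈ C
  colorLt : ∀ C ∈ 𝒞, c C < 3
  colorNe : ∀ C ∈ 𝒞, ∀ D ∈ 𝒞, C ≠ D → (C ∩ D).Nonempty → c C ≠ c D
  sep : ∀ u v : T.V, u ≠ v → ∃ C ∈ 𝒞, (u ∈ C ∧ v ∉ C) ∨ (v ∈ C ∧ u ∉ C)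
  card3 : ∀ C ∈ 𝒞, 3 ≤ C.ncard
  countNon : ∀ v : T.V, v ≠ T.x1 → v ≠ T.x2 → v ≠ T.x3 →
      {C ∈ 𝒞 | v ∈ C}.Finite ∧ {C ∈ 𝒞 | v ∈ C}.ncard = 2
  countX : ∀ v : T.V, v = T.x1 ∨ v = T.x2 ∨ v = T.x3 →
      {C ∈ 𝒞 | v ∈ C}.Finite ∧ {C ∈ 𝒞 | v ∈ C}.ncard = 1
  colX1 : ∀ C ∈ 𝒞, T.x1 ∈ C → c C = 0
  colX2 : ∀ C ∈ 𝒞, T.x2 ∈ C → c C = 1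
  colX3 : ∀ C ∈ 𝒞, T.x3 ∈ C → c C = 2

variable {𝒞 : Set (Set T.V)} {c : Set T.V → ℕ}

lemma Good.exists_mem (hG : Good T 𝒞 c) (a : T.V) : ∃ C ∈ 𝒞, a ∈ C := by
  by_cases h : a = T.x1 ∨ a = T.x2 ∨ a = T.x3
  · have h2 := (hG.countX a h).2
    have : {C ∈ 𝒞 | a ∈ C}.Nonempty := Set.nonempty_of_ncard_ne_zero (by omega)
    obtain ⟨C, hC, ha⟩ := this
    exact ⟨C, hC, ha⟩
  · push_neg at h
    have h2 := (hG.countNon a h.1 h.2.1 h.2.2).2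
    have : {C ∈ 𝒞 | a ∈ C}.Nonempty := Set.nonempty_of_ncard_ne_zero (by omega)
    obtain ⟨C, hC, ha⟩ := this
    exact ⟨C, hC, ha⟩

def glueCov (T : Tetrad) (𝒞 : Set (Set T.V)) : Set (Set (glue T).V) :=
  {S | ∃ i, ∃ C ∈ 𝒞, S = push T i C}

noncomputable def glueCol (T : Tetrad) (𝒞 : Set (Set T.V)) (c : Set T.V → ℕ)
    (S : Set (glue T).V) : ℕ :=
  sInf {m | ∃ i, ∃ C ∈ 𝒞, S = push T i C ∧ m = c C}

lemma glueCol_push (hG : Good T 𝒞 c) {C : Set T.V} (hC : C ∈ 𝒞) (i : Fin 3) :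
    glueCol T 𝒞 c (push T i C) = c C := by
  have : {m | ∃ j, ∃ D ∈ 𝒞, push T i C = push T j D ∧ m = c D} = {c C} := by
    ext m
    simp only [Set.mem_setOf_eq, Set.mem_singleton_iff]
    constructor
    · rintro ⟨j, D, hD, heq, rfl⟩
      obtain ⟨rfl, rfl⟩ := push_inj hG.distinct (hG.card3 C hC) heq
      rfl
    · rintro rfl
      exact ⟨i, C, hC, rfl, rfl⟩
  rw [glueCol, this, csInf_singleton]

lemma push_injective (hD : Distinct T) (i : Fin 3) :
    Function.Injective (push T i) := fun _ _ h => push_inj_same hD h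

/-- cliques of the glued cover through an unglued point -/
lemma cliquesAt_unglued (hD : Distinct T) {i : Fin 3} {a : T.V}
    (hug : ∀ p, ¬glueRel T (i, a) p ∧ ¬glueRel T p (i, a)) :
    {S ∈ glueCov T 𝒞 | Quot.mk (glueRel T) (i, a) ∈ S} =
      push T i '' {C ∈ 𝒞 | a ∈ C} := by
  ext S
  simp only [Set.mem_setOf_eq, Set.mem_image]
  constructor
  · rintro ⟨⟨j, D, hD', rfl⟩, b, hbD, hq⟩
    rcases (mk_eq_iff hD).1 hq with heq | hrel | hrel
    · obtain ⟨rfl, rfl⟩ : i = j ∧ a = b := Prod.mk.injEq .. ▸ heq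
      exact ⟨D, ⟨hD', hbD⟩, rfl⟩
    · exact absurd hrel (hug _).1
    · exact absurd hrel (hug _).2
  · rintro ⟨C, ⟨hC, haC⟩, rfl⟩
    exact ⟨⟨i, C, hC, rfl⟩, a, haC, rfl⟩

/-- cliques of the glued cover through a glued point -/
lemma cliquesAt_pair (hG : Good T 𝒞 c) {i j : Fin 3} {a b : T.V}
    (hrel : glueRel T (i, a) (j, b)) :
    {S ∈ glueCov T 𝒞 | Quot.mk (glueRel T) (i, a) ∈ S} =
      push T i '' {C ∈ 𝒞 | a ∈ C} ∪ push T j '' {D ∈ 𝒞 | b ∈ D} := by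
  have hD := hG.distinct
  ext S
  simp only [Set.mem_setOf_eq, Set.mem_union, Set.mem_image]
  constructor
  · rintro ⟨⟨k, E, hE, rfl⟩, e, heE, hq⟩
    rcases (mk_eq_iff hD).1 hq with heq | hrel2 | hrel2
    · obtain ⟨rfl, rfl⟩ : i = k ∧ a = e := Prod.mk.injEq .. ▸ heq
      exact Or.inl ⟨E, ⟨hE, heE⟩, rfl⟩
    · obtain ⟨rfl, rfl⟩ : j = k ∧ b = e := Prod.mk.injEq .. ▸ rel_right_unique hD hrel hrel2
      exact Or.inr ⟨E, ⟨hE, heE⟩, rfl⟩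
    · exact absurd (rel_trans_false hD hrel2 hrel) (by simp)
  · rintro (⟨C, ⟨hC, haC⟩, rfl⟩ | ⟨D, ⟨hD', hbD⟩, rfl⟩)
    · exact ⟨⟨i, C, hC, rfl⟩, a, haC, rfl⟩
    · exact ⟨⟨j, D, hD', rfl⟩, b, hbD, Quot.sound hrel⟩

lemma rel_ne_fst {i j : Fin 3} {a b : T.V} (hrel : glueRel T (i, a) (j, b)) : i ≠ j := by
  rcases hrel with ⟨h1, h2⟩ | ⟨h1, h2⟩ | ⟨h1, h2⟩ <;> simp_all [Prod.ext_iff]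

lemma cliquesAt_pair_count (hG : Good T 𝒞 c) {i j : Fin 3} {a b : T.V}
    (hrel : glueRel T (i, a) (j, b))
    (ha : a = T.x1 ∨ a = T.x2 ∨ a = T.x3) (hb : b = T.x1 ∨ b = T.x2 ∨ b = T.x3) :
    {S ∈ glueCov T 𝒞 | Quot.mk (glueRel T) (i, a) ∈ S}.Finite ∧
      {S ∈ glueCov T 𝒞 | Quot.mk (glueRel T) (i, a) ∈ S}.ncard = 2 := by
  have hD := hG.distinct
  rw [cliquesAt_pair hG hrel]
  have hfa := hG.countX a ha
  have hfb := hG.countX b hb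
  have hfina : (push T i '' {C ∈ 𝒞 | a ∈ C}).Finite := hfa.1.image _
  have hfinb : (push T j '' {D ∈ 𝒞 | b ∈ D}).Finite := hfb.1.image _
  have hdisj : Disjoint (push T i '' {C ∈ 𝒞 | a ∈ C}) (push T j '' {D ∈ 𝒞 | b ∈ D}) := by
    rw [Set.disjoint_left]
    rintro S ⟨C, ⟨hC, _⟩, rfl⟩ ⟨D, ⟨hD', _⟩, heq⟩
    exact rel_ne_fst hrel (push_inj hD (hG.card3 D hD') heq).1.symm
  constructor
  · exact hfina.union hfinb
  · rw [Set.ncard_union_eq hdisj hfina hfinb,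
      Set.ncard_image_of_injective _ (push_injective hD i),
      Set.ncard_image_of_injective _ (push_injective hD j), hfa.2, hfb.2]

lemma unglued_noncontact (hD : Distinct T) {i : Fin 3} {a : T.V}
    (h1 : a ≠ T.x1) (h2 : a ≠ T.x2) (h3 : a ≠ T.x3) (p : Fin 3 × T.V) :
    ¬glueRel T (i, a) p ∧ ¬glueRel T p (i, a) := by
  constructor <;> rintro (⟨h, h'⟩ | ⟨h, h'⟩ | ⟨h, h'⟩) <;> simp_all [Prod.ext_iff]

lemma unglued_c1 (hD : Distinct T) (p : Fin 3 × T.V) :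
    ¬glueRel T ((0 : Fin 3), T.x1) p ∧ ¬glueRel T p ((0 : Fin 3), T.x1) := by
  obtain ⟨d12, d13, d23⟩ := hD
  constructor <;> rintro (⟨h, h'⟩ | ⟨h, h'⟩ | ⟨h, h'⟩) <;> simp_all [Prod.ext_iff]

lemma unglued_c2 (hD : Distinct T) (p : Fin 3 × T.V) :
    ¬glueRel T ((1 : Fin 3), T.x2) p ∧ ¬glueRel T p ((1 : Fin 3), T.x2) := by
  obtain ⟨d12, d13, d23⟩ := hD
  constructor <;> rintro (⟨h, h'⟩ | ⟨h, h'⟩ | ⟨h, h'⟩) <;> simp_all [Prod.ext_iff]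

lemma unglued_c3 (hD : Distinct T) (p : Fin 3 × T.V) :
    ¬glueRel T ((2 : Fin 3), T.x3) p ∧ ¬glueRel T p ((2 : Fin 3), T.x3) := by
  obtain ⟨d12, d13, d23⟩ := hD
  constructor <;> rintro (⟨h, h'⟩ | ⟨h, h'⟩ | ⟨h, h'⟩) <;> simp_all [Prod.ext_iff]

lemma hr01 (T : Tetrad) : glueRel T (0, T.x2) (1, T.x1) := Or.inl ⟨rfl, rfl⟩
lemma hr12 (T : Tetrad) : glueRel T (1, T.x3) (2, T.x2) := Or.inr (Or.inl ⟨rfl, rfl⟩)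
lemma hr20 (T : Tetrad) : glueRel T (2, T.x1) (0, T.x3) := Or.inr (Or.inr ⟨rfl, rfl⟩)

lemma cliquesAt_pair_count' (hG : Good T 𝒞 c) {i j : Fin 3} {a b : T.V}
    (hrel : glueRel T (i, a) (j, b))
    (ha : a = T.x1 ∨ a = T.x2 ∨ a = T.x3) (hb : b = T.x1 ∨ b = T.x2 ∨ b = T.x3) :
    {S ∈ glueCov T 𝒞 | Quot.mk (glueRel T) (j, b) ∈ S}.Finite ∧
      {S ∈ glueCov T 𝒞 | Quot.mk (glueRel T) (j, b) ∈ S}.ncard = 2 := by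
  have h := cliquesAt_pair_count hG hrel ha hb
  rwa [Quot.sound hrel] at h

theorem good_glue (hG : Good T 𝒞 c) : Good (glue T) (glueCov T 𝒞) (glueCol T 𝒞 c) := by
  have hD := hG.distinct
  obtain ⟨d12, d13, d23⟩ := hG.distinct
  have hx1 : (glue T).x1 = Quot.mk (glueRel T) (0, T.x1) := rfl
  have hx2 : (glue T).x2 = Quot.mk (glueRel T) (1, T.x2) := rfl
  have hx3 : (glue T).x3 = Quot.mk (glueRel T) (2, T.x3) := rfl
  constructor
  case distinct =>
    refine ⟨?_, ?_, ?_⟩ <;>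
      · simp only [hx1, hx2, hx3]
        intro h
        rcases (mk_eq_iff hD).1 h with h | (⟨h, h'⟩ | ⟨h, h'⟩ | ⟨h, h'⟩) |
          (⟨h, h'⟩ | ⟨h, h'⟩ | ⟨h, h'⟩) <;> simp_all [Prod.ext_iff]
  case clique =>
    rintro S ⟨i, C, hC, rfl⟩ u hu v hv huv
    obtain ⟨a, haC, rfl⟩ := hu
    obtain ⟨b, hbC, rfl⟩ := hv
    have hab : a ≠ b := fun h => huv (by rw [h])
    exact ⟨huv, i, a, b, rfl, rfl, hG.clique C hC haC hbC hab⟩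
  case cover =>
    rintro u v ⟨hne, i, a, b, rfl, rfl, hab⟩
    obtain ⟨C, hC, ha, hb⟩ := hG.cover a b hab
    exact ⟨push T i C, ⟨i, C, hC, rfl⟩, ⟨a, ha, rfl⟩, ⟨b, hb, rfl⟩⟩
  case colorLt =>
    rintro S ⟨i, C, hC, rfl⟩
    rw [glueCol_push hG hC]
    exact hG.colorLt C hC
  case colorNe =>
    rintro S ⟨i, C, hC, rfl⟩ S' ⟨j, D, hD', rfl⟩ hne ⟨v, hvC, hvD⟩
    obtain ⟨a, haC, rfl⟩ := hvC
    obtain ⟨b, hbD, hq⟩ := hvD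
    rw [glueCol_push hG hC, glueCol_push hG hD']
    rcases (mk_eq_iff hD).1 hq with heq | hrel | hrel
    · obtain ⟨rfl, rfl⟩ : i = j ∧ a = b := Prod.mk.injEq .. ▸ heq
      exact hG.colorNe C hC D hD' (fun h => hne (by rw [h])) ⟨a, haC, hbD⟩
    · rcases hrel with ⟨h1, h2⟩ | ⟨h1, h2⟩ | ⟨h1, h2⟩ <;>
        · obtain ⟨rfl, rfl⟩ := Prod.mk.injEq .. ▸ h1
          obtain ⟨rfl, rfl⟩ := Prod.mk.injEq .. ▸ h2
          first
          | (rw [hG.colX2 C hC haC, hG.colX1 D hD' hbD]; omega)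
          | (rw [hG.colX3 C hC haC, hG.colX2 D hD' hbD]; omega)
          | (rw [hG.colX1 C hC haC, hG.colX3 D hD' hbD]; omega)
    · rcases hrel with ⟨h1, h2⟩ | ⟨h1, h2⟩ | ⟨h1, h2⟩ <;>
        · obtain ⟨rfl, rfl⟩ := Prod.mk.injEq .. ▸ h1
          obtain ⟨rfl, rfl⟩ := Prod.mk.injEq .. ▸ h2
          first
          | (rw [hG.colX1 C hC haC, hG.colX2 D hD' hbD]; omega)
          | (rw [hG.colX2 C hC haC, hG.colX3 D hD' hbD]; omega)
          | (rw [hG.colX3 C hC haC, hG.colX1 D hD' hbD]; omega)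
  case sep =>
    intro u v huv
    by_cases hsame : ∃ i a b, u = Quot.mk (glueRel T) (i, a) ∧ v = Quot.mk (glueRel T) (i, b)
    · obtain ⟨i, a, b, rfl, rfl⟩ := hsame
      have hab : a ≠ b := fun h => huv (by rw [h])
      obtain ⟨C, hC, hcase⟩ := hG.sep a b hab
      refine ⟨push T i C, ⟨i, C, hC, rfl⟩, ?_⟩
      rcases hcase with ⟨haC, hbC⟩ | ⟨hbC, haC⟩
      · exact Or.inl ⟨⟨a, haC, rfl⟩, fun ⟨b', hb'C, hq⟩ => hbC ((mk_copy_inj hD hq) ▸ hb'C)⟩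
      · exact Or.inr ⟨⟨b, hbC, rfl⟩, fun ⟨a', ha'C, hq⟩ => haC ((mk_copy_inj hD hq) ▸ ha'C)⟩
    · obtain ⟨⟨i, a⟩, rfl⟩ := Quot.exists_rep u
      obtain ⟨C, hC, haC⟩ := hG.exists_mem a
      refine ⟨push T i C, ⟨i, C, hC, rfl⟩, Or.inl ⟨⟨a, haC, rfl⟩, ?_⟩⟩
      rintro ⟨b, hbC, hq⟩
      exact hsame ⟨i, a, b, rfl, hq⟩
  case card3 =>
    rintro S ⟨i, C, hC, rfl⟩
    rw [push_ncard hD]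
    exact hG.card3 C hC
  case countNon =>
    intro v h1 h2 h3
    rw [hx1] at h1; rw [hx2] at h2; rw [hx3] at h3
    obtain ⟨⟨i, a⟩, rfl⟩ := Quot.exists_rep v
    by_cases hca : a = T.x1 ∨ a = T.x2 ∨ a = T.x3
    · rcases hca with rfl | rfl | rfl
      · fin_cases i
        · exact absurd rfl h1
        · exact cliquesAt_pair_count' hG (hr01 T) (Or.inr (Or.inl rfl)) (Or.inl rfl)
        · exact cliquesAt_pair_count hG (hr20 T) (Or.inl rfl) (Or.inr (Or.inr rfl))
      · fin_cases i
        · exact cliquesAt_pair_count hG (hr01 T) (Or.inr (Or.inl rfl)) (Or.inl rfl)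
        · exact absurd rfl h2
        · exact cliquesAt_pair_count' hG (hr12 T) (Or.inr (Or.inr rfl)) (Or.inr (Or.inl rfl))
      · fin_cases i
        · exact cliquesAt_pair_count' hG (hr20 T) (Or.inl rfl) (Or.inr (Or.inr rfl))
        · exact cliquesAt_pair_count hG (hr12 T) (Or.inr (Or.inr rfl)) (Or.inr (Or.inl rfl))
        · exact absurd rfl h3
    · push_neg at hca
      erw [cliquesAt_unglued hD (unglued_noncontact hD hca.1 hca.2.1 hca.2.2)]
      have hcount := hG.countNon a hca.1 hca.2.1 hca.2.2
      exact ⟨hcount.1.image _,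
        by rw [Set.ncard_image_of_injective _ (push_injective hD i)]; exact hcount.2⟩
  case countX =>
    intro v hv
    rcases hv with rfl | rfl | rfl
    · erw [hx1, cliquesAt_unglued hD (unglued_c1 hD)]
      have hcount := hG.countX T.x1 (Or.inl rfl)
      exact ⟨hcount.1.image _,
        by rw [Set.ncard_image_of_injective _ (push_injective hD 0)]; exact hcount.2⟩
    · erw [hx2, cliquesAt_unglued hD (unglued_c2 hD)]
      have hcount := hG.countX T.x2 (Or.inr (Or.inl rfl))
      exact ⟨hcount.1.image _,
        by rw [Set.ncard_image_of_injective _ (push_injective hD 1)]; exact hcount.2⟩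
    · erw [hx3, cliquesAt_unglued hD (unglued_c3 hD)]
      have hcount := hG.countX T.x3 (Or.inr (Or.inr rfl))
      exact ⟨hcount.1.image _,
        by rw [Set.ncard_image_of_injective _ (push_injective hD 2)]; exact hcount.2⟩
  case colX1 =>
    rintro S ⟨j, D, hD', rfl⟩ ⟨b, hbD, hq⟩
    rw [hx1] at hq
    rw [glueCol_push hG hD']
    rcases (mk_eq_iff hD).1 hq with heq | hrel | hrel
    · obtain ⟨rfl, rfl⟩ : (0 : Fin 3) = j ∧ T.x1 = b := Prod.mk.injEq .. ▸ heq
      exact hG.colX1 D hD' hbD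
    · exact absurd hrel (unglued_c1 hD _).1
    · exact absurd hrel (unglued_c1 hD _).2
  case colX2 =>
    rintro S ⟨j, D, hD', rfl⟩ ⟨b, hbD, hq⟩
    rw [hx2] at hq
    rw [glueCol_push hG hD']
    rcases (mk_eq_iff hD).1 hq with heq | hrel | hrel
    · obtain ⟨rfl, rfl⟩ : (1 : Fin 3) = j ∧ T.x2 = b := Prod.mk.injEq .. ▸ heq
      exact hG.colX2 D hD' hbD
    · exact absurd hrel (unglued_c2 hD _).1
    · exact absurd hrel (unglued_c2 hD _).2
  case colX3 =>
    rintro S ⟨j, D, hD', rfl⟩ ⟨b, hbD, hq⟩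
    rw [hx3] at hq
    rw [glueCol_push hG hD']
    rcases (mk_eq_iff hD).1 hq with heq | hrel | hrel
    · obtain ⟨rfl, rfl⟩ : (2 : Fin 3) = j ∧ T.x3 = b := Prod.mk.injEq .. ▸ heq
      exact hG.colX3 D hD' hbD
    · exact absurd hrel (unglued_c3 hD _).1
    · exact absurd hrel (unglued_c3 hD _).2

/-! ### Base case: `SG 2 = glue (SG 1)` -/

instance : DecidableEq (SG 1).V := (inferInstance : DecidableEq (Fin 3))

instance (p q : Fin 3 × (SG 1).V) : Decidable (glueRel (SG 1) p q) := by
  unfold glueRel; infer_instance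

lemma hD1 : Distinct (SG 1) := ⟨by decide, by decide, by decide⟩

lemma univ_ncard : (Set.univ : Set (SG 1).V).ncard = 3 := by
  rw [Set.ncard_univ]
  exact Nat.card_eq_of_equiv_fin (Equiv.refl (Fin 3))

def baseCov : Set (Set (glue (SG 1)).V) := {S | ∃ k : Fin 3, S = push (SG 1) k Set.univ}

noncomputable def baseCol (S : Set (glue (SG 1)).V) : ℕ :=
  sInf {m | ∃ k : Fin 3, S = push (SG 1) k Set.univ ∧ m = (k : ℕ)}

lemma pushU_inj {j k : Fin 3} (h : push (SG 1) j Set.univ = push (SG 1) k Set.univ) :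
    j = k := (push_inj hD1 (le_of_eq univ_ncard.symm) h).1

lemma baseCol_push (k : Fin 3) : baseCol (push (SG 1) k Set.univ) = (k : ℕ) := by
  have : {m | ∃ j : Fin 3, push (SG 1) k Set.univ = push (SG 1) j Set.univ ∧ m = (j : ℕ)}
      = {(k : ℕ)} := by
    ext m
    simp only [Set.mem_setOf_eq, Set.mem_singleton_iff]
    constructor
    · rintro ⟨j, heq, rfl⟩
      rw [pushU_inj heq]
    · rintro rfl
      exact ⟨k, rfl, rfl⟩
  rw [baseCol, this, csInf_singleton]

lemma core1 : ∀ i a k b : Fin 3,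
    ((i, a) = (k, b) ∨ glueRel (SG 1) (i, a) (k, b) ∨ glueRel (SG 1) (k, b) (i, a)) →
      i = k ∨ a = k := by simp only [glueRel, SG]; decide

lemma swap_mk : ∀ i k : Fin 3, i ≠ k →
    Quot.mk (glueRel (SG 1)) (i, k) = Quot.mk (glueRel (SG 1)) (k, i) := by
  intro i k h
  fin_cases i <;> fin_cases k <;>
    first
    | exact absurd rfl h
    | exact Quot.sound (hr01 (SG 1))
    | exact (Quot.sound (hr01 (SG 1))).symm
    | exact Quot.sound (hr12 (SG 1))
    | exact (Quot.sound (hr12 (SG 1))).symm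
    | exact Quot.sound (hr20 (SG 1))
    | exact (Quot.sound (hr20 (SG 1))).symm

lemma memT {i : Fin 3} {a : (SG 1).V} {k : Fin 3} :
    Quot.mk (glueRel (SG 1)) (i, a) ∈ push (SG 1) k Set.univ ↔ i = k ∨ a = k := by
  constructor
  · rintro ⟨b, -, hq⟩
    exact core1 i a k b ((mk_eq_iff hD1).1 hq)
  · rintro (rfl | h2)
    · exact ⟨a, trivial, rfl⟩
    · rcases eq_or_ne i k with rfl | h
      · exact ⟨a, trivial, rfl⟩
      · exact ⟨i, trivial, by rw [h2]; exact swap_mk i k h⟩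

lemma sep_core : ∀ i a j b : Fin 3,
    ¬((i, a) = (j, b) ∨ glueRel (SG 1) (i, a) (j, b) ∨ glueRel (SG 1) (j, b) (i, a)) →
      ∃ k : Fin 3, ((i = k ∨ a = k) ∧ ¬(j = k ∨ b = k)) ∨
        ((j = k ∨ b = k) ∧ ¬(i = k ∨ a = k)) := by simp only [glueRel, SG]; decide

theorem good_base : Good (glue (SG 1)) baseCov baseCol := by
  constructor
  case distinct =>
    refine ⟨?_, ?_, ?_⟩ <;>
      · intro h
        rcases (mk_eq_iff hD1).1 h with h | (⟨h, -⟩ | ⟨h, -⟩ | ⟨h, -⟩) |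
          (⟨h, -⟩ | ⟨h, -⟩ | ⟨h, -⟩) <;> exact absurd h (by decide)
  case clique =>
    rintro S ⟨k, rfl⟩ u hu v hv huv
    obtain ⟨a, -, rfl⟩ := hu
    obtain ⟨b, -, rfl⟩ := hv
    exact ⟨huv, k, a, b, rfl, rfl, fun h => huv (by rw [h])⟩
  case cover =>
    rintro u v ⟨hne, i, a, b, rfl, rfl, hab⟩
    exact ⟨push (SG 1) i Set.univ, ⟨i, rfl⟩, ⟨a, trivial, rfl⟩, ⟨b, trivial, rfl⟩⟩
  case colorLt =>
    rintro S ⟨k, rfl⟩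
    rw [baseCol_push]
    exact k.isLt
  case colorNe =>
    rintro S ⟨j, rfl⟩ S' ⟨k, rfl⟩ hne -
    rw [baseCol_push, baseCol_push]
    intro h
    exact hne (by rw [show j = k from Fin.val_injective h])
  case sep =>
    intro u v huv
    obtain ⟨⟨i, a⟩, rfl⟩ := Quot.exists_rep u
    obtain ⟨⟨j, b⟩, rfl⟩ := Quot.exists_rep v
    have hne : ¬((i, a) = (j, b) ∨ glueRel (SG 1) (i, a) (j, b) ∨
        glueRel (SG 1) (j, b) (i, a)) := fun h => huv ((mk_eq_iff hD1).2 h)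
    obtain ⟨k, hk⟩ := sep_core i a j b hne
    refine ⟨push (SG 1) k Set.univ, ⟨k, rfl⟩, ?_⟩
    rcases hk with ⟨h1, h2⟩ | ⟨h1, h2⟩
    · exact Or.inl ⟨memT.2 h1, fun hm => h2 (memT.1 hm)⟩
    · exact Or.inr ⟨memT.2 h1, fun hm => h2 (memT.1 hm)⟩
  case card3 =>
    rintro S ⟨k, rfl⟩
    rw [push_ncard hD1, univ_ncard]
  case countNon =>
    intro v h1 h2 h3
    obtain ⟨⟨i, a⟩, rfl⟩ := Quot.exists_rep v
    have hia : i ≠ a := by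
      rintro rfl
      fin_cases i
      exacts [h1 rfl, h2 rfl, h3 rfl]
    have hset : {S ∈ baseCov | Quot.mk (glueRel (SG 1)) (i, a) ∈ S} =
        {push (SG 1) i Set.univ, push (SG 1) a Set.univ} := by
      ext S
      simp only [Set.mem_setOf_eq, Set.mem_insert_iff, Set.mem_singleton_iff]
      constructor
      · rintro ⟨⟨k, rfl⟩, hm⟩
        rcases memT.1 hm with rfl | rfl
        · exact Or.inl rfl
        · exact Or.inr rfl
      · rintro (rfl | rfl)
        · exact ⟨⟨i, rfl⟩, memT.2 (Or.inl rfl)⟩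
        · exact ⟨⟨a, rfl⟩, memT.2 (Or.inr rfl)⟩
    erw [hset]
    refine ⟨(Set.finite_singleton _).insert _, ?_⟩
    exact Set.ncard_pair fun h => hia (pushU_inj h)
  case countX =>
    intro v hv
    have hset : ∀ (k : Fin 3) (a : (SG 1).V), a = k →
        {S ∈ baseCov | Quot.mk (glueRel (SG 1)) (k, a) ∈ S} = {push (SG 1) k Set.univ} := by
      rintro k a rfl
      ext S
      simp only [Set.mem_setOf_eq, Set.mem_singleton_iff]
      constructor
      · rintro ⟨⟨j, rfl⟩, hm⟩
        rcases memT.1 hm with rfl | rfl <;> rfl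
      · rintro rfl
        exact ⟨⟨a, rfl⟩, memT.2 (Or.inl rfl)⟩
    rcases hv with rfl | rfl | rfl
    · erw [show (glue (SG 1)).x1 = Quot.mk (glueRel (SG 1)) ((0 : Fin 3), (SG 1).x1) from rfl,
        hset 0 (SG 1).x1 rfl]
      exact ⟨Set.finite_singleton _, Set.ncard_singleton _⟩
    · erw [show (glue (SG 1)).x2 = Quot.mk (glueRel (SG 1)) ((1 : Fin 3), (SG 1).x2) from rfl,
        hset 1 (SG 1).x2 rfl]
      exact ⟨Set.finite_singleton _, Set.ncard_singleton _⟩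
    · erw [show (glue (SG 1)).x3 = Quot.mk (glueRel (SG 1)) ((2 : Fin 3), (SG 1).x3) from rfl,
        hset 2 (SG 1).x3 rfl]
      exact ⟨Set.finite_singleton _, Set.ncard_singleton _⟩
  case colX1 =>
    rintro S ⟨k, rfl⟩ hm
    rw [baseCol_push]
    have hm' : Quot.mk (glueRel (SG 1)) ((0 : Fin 3), (SG 1).x1) ∈ push (SG 1) k Set.univ := hm
    have hk : k = (0 : Fin 3) := by
      rcases memT.1 hm' with rfl | h2
      · rfl
      · exact h2.symm
    subst hk
    rfl
  case colX2 =>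
    rintro S ⟨k, rfl⟩ hm
    rw [baseCol_push]
    have hm' : Quot.mk (glueRel (SG 1)) ((1 : Fin 3), (SG 1).x2) ∈ push (SG 1) k Set.univ := hm
    have hk : k = (1 : Fin 3) := by
      rcases memT.1 hm' with rfl | h2
      · rfl
      · exact h2.symm
    subst hk
    rfl
  case colX3 =>
    rintro S ⟨k, rfl⟩ hm
    rw [baseCol_push]
    have hm' : Quot.mk (glueRel (SG 1)) ((2 : Fin 3), (SG 1).x3) ∈ push (SG 1) k Set.univ := hm
    have hk : k = (2 : Fin 3) := by
      rcases memT.1 hm' with rfl | h2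
      · rfl
      · exact h2.symm
    subst hk
    rfl

theorem exists_good : ∀ n, 2 ≤ n → ∃ (𝒞 : Set (Set (SG n).V)) (c : Set (SG n).V → ℕ),
    Good (SG n) 𝒞 c := by
  intro n hn
  induction n, hn using Nat.le_induction with
  | base => exact ⟨baseCov, baseCol, good_base⟩
  | succ n hn ih =>
      obtain ⟨𝒞, c, h⟩ := ih
      match n, hn with
      | (m + 2), _ =>
          exact ⟨glueCov _ 𝒞, glueCol _ 𝒞 c, good_glue h⟩

end SGaux

/-- For every `n ≥ 2` the Sierpinski gasket graph `S_n` admits a clique 2-cover, and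
a separating equivalent 3-cover in which every non-contact vertex is in exactly two
cliques, every contact vertex is in exactly one clique, and cliques containing distinct
contact vertices get distinct colors. -/
theorem stmt_13 (n : ℕ) (hn : 2 ≤ n) :
    (∃ 𝒞 : Set (Set (SG n).V), CliqueKCoverS (SG n).G 2 𝒞) ∧
    ∃ (𝒞 : Set (Set (SG n).V)) (c : Set (SG n).V → ℕ),
      SepEqCoverWith (SG n).G 3 𝒞 c ∧
      (∀ v : (SG n).V, v ∉ ({(SG n).x1, (SG n).x2, (SG n).x3} : Set (SG n).V) →
        {C ∈ 𝒞 | v ∈ C}.ncard = 2) ∧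
      (∀ v : (SG n).V, v ∈ ({(SG n).x1, (SG n).x2, (SG n).x3} : Set (SG n).V) →
        {C ∈ 𝒞 | v ∈ C}.ncard = 1) ∧
      (∀ C ∈ 𝒞, ∀ D ∈ 𝒞,
        ∀ y ∈ ({(SG n).x1, (SG n).x2, (SG n).x3} : Set (SG n).V),
        ∀ z ∈ ({(SG n).x1, (SG n).x2, (SG n).x3} : Set (SG n).V),
          y ≠ z → y ∈ C → z ∈ D → c C ≠ c D) := by
  obtain ⟨𝒞, c, hG⟩ := SGaux.exists_good n hn
  have hcount : ∀ v : (SG n).V, {C ∈ 𝒞 | v ∈ C}.Finite ∧ {C ∈ 𝒞 | v ∈ C}.ncard ≤ 2 := by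
    intro v
    by_cases hv : v = (SG n).x1 ∨ v = (SG n).x2 ∨ v = (SG n).x3
    · have h := hG.countX v hv
      exact ⟨h.1, by omega⟩
    · push_neg at hv
      have h := hG.countNon v hv.1 hv.2.1 hv.2.2
      exact ⟨h.1, by omega⟩
  constructor
  · exact ⟨𝒞, hG.clique, hG.cover, hcount⟩
  · refine ⟨𝒞, c, ⟨hG.clique, hG.cover, hG.colorLt, hG.colorNe, hG.sep⟩, ?_, ?_, ?_⟩
    · intro v hv
      simp only [Set.mem_insert_iff, Set.mem_singleton_iff, not_or] at hv
      exact (hG.countNon v hv.1 hv.2.1 hv.2.2).2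
    · intro v hv
      simp only [Set.mem_insert_iff, Set.mem_singleton_iff] at hv
      exact (hG.countX v hv).2
    · intro C hC D hD y hy z hz hyz hyC hzD
      simp only [Set.mem_insert_iff, Set.mem_singleton_iff] at hy hz
      rcases hy with rfl | rfl | rfl <;> rcases hz with rfl | rfl | rfl <;>
        first
        | exact absurd rfl hyz
        | (rw [hG.colX1 C hC hyC, hG.colX2 D hD hzD]; omega)
        | (rw [hG.colX1 C hC hyC, hG.colX3 D hD hzD]; omega)
        | (rw [hG.colX2 C hC hyC, hG.colX1 D hD hzD]; omega)
        | (rw [hG.colX2 C hC hyC, hG.colX3 D hD hzD]; omega)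
        | (rw [hG.colX3 C hC hyC, hG.colX1 D hD hzD]; omega)
        | (rw [hG.colX3 C hC hyC, hG.colX2 D hD hzD]; omega)
end
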